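/- arXiv:2312.11263 — 9 statements merged into one kernel-verified Lean document; each statement's English description precedes it below -/
import Mathlib

section
/- Let A be a noncyclic abelian finite group acting by automorphisms on a finite abelian group V with gcd(|A|,|V|) = 1. Then the intersection over all nontrivial a ∈ A of the subgroups [V,a] is trivial, where [V,a] denotes the subgroup of V generated by all elements v⁻¹·(a•v) with v ∈ V. -/
open Finset


lemma exists_rank_two {A : Type*} [CommGroup A] [Finite A] (hnc : ¬ IsCyclic A) :
    ∃ p : ℕ, p.Prime ∧ p ∣ Nat.card A ∧
      ∃ a b : A, a ^ p = 1 ∧ b ^ p = 1 ∧ b ≠ 1 ∧ a ∉ Subgroup.zpowers b := by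
  classical
  have hEE : Monoid.ExponentExists A := Monoid.ExponentExists.of_finite
  obtain ⟨g, hg⟩ := Monoid.exists_orderOf_eq_exponent hEE
  set e := Monoid.exponent A with he
  have he0 : e ≠ 0 := hEE.exponent_ne_zero
  -- there is an element outside zpowers g
  obtain ⟨y, hy⟩ : ∃ y : A, y ∉ Subgroup.zpowers g := by
    by_contra h
    push_neg at h
    exact hnc ⟨⟨g, h⟩⟩
  -- the quotient is nontrivial
  let Q := A ⧸ Subgroup.zpowers g
  have hyQ : (QuotientGroup.mk y : Q) ≠ 1 := by
    simpa [QuotientGroup.eq_one_iff] using hy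
  have hQnt : Nontrivial Q := ⟨_, _, hyQ⟩
  have hQ1 : Nat.card Q ≠ 1 := by
    intro h
    rw [Nat.card_eq_one_iff_unique] at h
    exact (not_subsingleton Q) h.1
  set p := (Nat.card Q).minFac with hpdef
  have hp : p.Prime := Nat.minFac_prime hQ1
  have hpQ : p ∣ Nat.card Q := Nat.minFac_dvd _
  have hpA : p ∣ Nat.card A := by
    have := Subgroup.card_eq_card_quotient_mul_card_subgroup (Subgroup.zpowers g)
    exact this ▸ Dvd.dvd.mul_right hpQ _
  haveI : Fact p.Prime := ⟨hp⟩
  obtain ⟨c', hc'⟩ := exists_prime_orderOf_dvd_card' (G := Q) p hpQ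
  obtain ⟨c, rfl⟩ := QuotientGroup.mk_surjective c'
  have hc1 : c ∉ Subgroup.zpowers g := by
    intro h
    have : (QuotientGroup.mk c : Q) = 1 := (QuotientGroup.eq_one_iff c).mpr h
    rw [this] at hc'
    simp at hc'
    exact hp.ne_one hc'.symm
  have hcp : c ^ p ∈ Subgroup.zpowers g := by
    rw [← QuotientGroup.eq_one_iff]
    rw [QuotientGroup.mk_pow]  -- maybe push_cast
    rw [← hc']
    exact pow_orderOf_eq_one _
  obtain ⟨k, hk⟩ := Subgroup.mem_zpowers_iff.mp hcp
  -- p divides e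
  have hpe : p ∣ e := by
    obtain ⟨z, hz⟩ := exists_prime_orderOf_dvd_card' (G := A) p hpA
    exact hz ▸ Monoid.order_dvd_exponent z
  set q := e / p with hq
  have hq0 : q ≠ 0 := by
    intro h
    have := Nat.div_mul_cancel hpe
    rw [← hq, h, zero_mul] at this
    exact he0 this.symm
  have heq : q * p = e := Nat.div_mul_cancel hpe
  -- p ∣ k
  have hce : c ^ e = 1 := Monoid.pow_exponent_eq_one c
  have hgk : g ^ (k * (q : ℤ)) = 1 := by
    rw [zpow_mul, hk, zpow_natCast, ← pow_mul, mul_comm p q, heq, hce]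
  have hdvd : (e : ℤ) ∣ k * (q : ℤ) := by
    rw [← hg]
    exact orderOf_dvd_iff_zpow_eq_one.mpr hgk
  have hpk : (p : ℤ) ∣ k := by
    have h2 : (p : ℤ) * (q : ℤ) ∣ k * (q : ℤ) := by
      rw [mul_comm (p:ℤ)]
      have : ((q * p : ℕ) : ℤ) = (q : ℤ) * (p : ℤ) := by push_cast; ring
      rw [← this, heq]
      exact hdvd
    exact (mul_dvd_mul_iff_right (by exact_mod_cast hq0)).mp h2
  obtain ⟨m, hm⟩ := hpk
  refine ⟨p, hp, hpA, c * (g ^ m)⁻¹, g ^ q, ?_, ?_, ?_, ?_⟩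
  · rw [mul_pow, inv_pow, ← zpow_natCast (g ^ m), ← zpow_mul, mul_comm m (p:ℤ), ← hm, hk]
    exact mul_inv_cancel _
  · rw [← pow_mul, heq, ← hg]
    exact pow_orderOf_eq_one g
  · intro h
    have hde : e ∣ q := hg ▸ orderOf_dvd_of_pow_eq_one h
    have : e ≤ q := Nat.le_of_dvd (Nat.pos_of_ne_zero hq0) hde
    have : q < e := by
      rw [hq]
      exact Nat.div_lt_self (Nat.pos_of_ne_zero he0) hp.one_lt
    omega
  · intro h
    have hle : Subgroup.zpowers (g ^ q) ≤ Subgroup.zpowers g :=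
      Subgroup.zpowers_le.mpr (Subgroup.pow_mem _ (Subgroup.mem_zpowers g) q)
    have : c ∈ Subgroup.zpowers g := by
      have := Subgroup.mul_mem _ (hle h) (Subgroup.zpow_mem _ (Subgroup.mem_zpowers g) m)
      simpa using this
    exact hc1 this

/-- If `b ^ p = 1` then powers of `b` only depend on the exponent mod `p`. -/
private lemma pow_mod_of_pow_eq_one {V : Type*} [Monoid V] {b : V} {p : ℕ} (hb : b ^ p = 1) (m : ℕ) :
    b ^ m = b ^ (m % p) := by
  conv_lhs => rw [← Nat.div_add_mod m p, pow_add, pow_mul, hb, one_pow, one_mul]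

/-- The norm over `⟨c⟩` kills elements of `[V, c]`. -/
private lemma norm_eq_one {A V : Type*} [Group A] [CommGroup V] (φ : A →* MulAut V) {c : A} {x w : V} (hx : x = w⁻¹ * φ c w)
    {p : ℕ} (hcp : c ^ p = 1) :
    ∏ j ∈ range p, φ (c ^ j) x = 1 := by
  have hterm : ∀ j : ℕ, φ (c ^ j) x = φ (c ^ (j + 1)) w / φ (c ^ j) w := by
    intro j
    rw [hx, map_mul, map_inv, pow_succ, map_mul φ, MulAut.mul_apply]
    rw [inv_mul_eq_div]
  rw [Finset.prod_congr rfl fun j _ => hterm j]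
  rw [Finset.prod_range_div (fun j => φ (c ^ j) w) p]
  rw [hcp, pow_zero, map_one φ]
  simp


/-- Let `A` be a noncyclic abelian finite group acting by automorphisms on
a finite abelian group `V` with `gcd(|A|,|V|) = 1`. Then the intersection over all
nontrivial `a ∈ A` of the subgroups `[V,a]` is trivial, where `[V,a]` is the subgroup of
`V` generated by all `v⁻¹ * (a • v)`. -/
theorem iInf_commutator_subgroup_eq_bot_of_noncyclic_abelian_coprime_action
    (A V : Type*) [CommGroup A] [Finite A] [CommGroup V] [Finite V]
    (φ : A →* MulAut V)
    (hnc : ¬ IsCyclic A)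
    (hcop : Nat.Coprime (Nat.card A) (Nat.card V)) :
    (⨅ (a : A) (_ : a ≠ 1),
      Subgroup.closure {x : V | ∃ v : V, x = v⁻¹ * (φ a v)}) = ⊥ := by
  classical
  rw [eq_bot_iff]
  intro x hx
  simp only [Subgroup.mem_iInf] at hx
  rw [Subgroup.mem_bot]
  -- membership gives explicit commutator form
  have hmem : ∀ c : A, c ≠ 1 → ∃ w : V, x = w⁻¹ * φ c w := by
    intro c hc
    have hxc := hx c hc
    -- the generating set is the range of a monoid hom
    let τ : V →* V :=
      { toFun := fun v => v⁻¹ * φ c v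
        map_one' := by simp
        map_mul' := by
          intro v u
          simp only [map_mul, mul_inv]
          exact mul_mul_mul_comm _ _ _ _ }
    have hle : Subgroup.closure {y : V | ∃ v : V, y = v⁻¹ * (φ c v)} ≤ τ.range := by
      apply Subgroup.closure_le _ |>.mpr
      rintro y ⟨v, rfl⟩
      exact ⟨v, rfl⟩
    obtain ⟨w, hw⟩ := hle hxc
    exact ⟨w, hw.symm⟩
  obtain ⟨p, hp, hpA, a, b, hap, hbp, hb1, hab⟩ := exists_rank_two hnc
  have hp0 : 0 < p := hp.pos
  -- norm of x over any nontrivial c with c^p = 1 is trivial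
  have norm : ∀ c : A, c ≠ 1 → c ^ p = 1 → ∏ j ∈ range p, φ (c ^ j) x = 1 := by
    intro c hc hcp
    obtain ⟨w, hw⟩ := hmem c hc
    exact norm_eq_one φ hw hcp
  have hNb : ∏ k ∈ range p, φ (b ^ k) x = 1 := norm b hb1 hbp
  have hNab : ∀ i : ℕ, ∏ j ∈ range p, φ ((a * b ^ i) ^ j) x = 1 := by
    intro i
    refine norm _ (fun h => hab ?_) (by rw [mul_pow, hap, one_mul, ← pow_mul, mul_comm i p,
      pow_mul, hbp, one_pow])
    rw [eq_inv_of_mul_eq_one_left h]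
    exact Subgroup.inv_mem _ (Subgroup.pow_mem _ (Subgroup.mem_zpowers b) i)
  -- the double product
  have h1 : ∏ j ∈ range p, ∏ i ∈ range p, φ ((a * b ^ i) ^ j) x = 1 := by
    rw [Finset.prod_comm]
    exact Finset.prod_eq_one fun i _ => hNab i
  have hinner : ∀ j ∈ range p, (∏ i ∈ range p, φ ((a * b ^ i) ^ j) x)
      = if j = 0 then x ^ p else 1 := by
    intro j hj
    rcases eq_or_ne j 0 with rfl | hj0
    · simp
    · rw [if_neg hj0]
      have hterm : ∀ i : ℕ, φ ((a * b ^ i) ^ j) x = φ (a ^ j * b ^ (i * j % p)) x := by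
        intro i
        rw [mul_pow, ← pow_mul, pow_mod_of_pow_eq_one hbp]
      rw [Finset.prod_congr rfl fun i _ => hterm i]
      have hjp : ¬ p ∣ j := by
        intro h
        have := Nat.le_of_dvd (Nat.pos_of_ne_zero hj0) h
        have := Finset.mem_range.mp hj
        omega
      have hcop' : Nat.gcd p j = 1 := hp.coprime_iff_not_dvd.mpr hjp
      have hmaps : ∀ i ∈ range p, i * j % p ∈ range p :=
        fun i _ => Finset.mem_range.mpr (Nat.mod_lt _ hp0)
      have hinj : ∀ i₁ ∈ range p, ∀ i₂ ∈ range p,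
          i₁ * j % p = i₂ * j % p → i₁ = i₂ := by
        intro i₁ h₁ i₂ h₂ h
        have : i₁ * j ≡ i₂ * j [MOD p] := h
        have := Nat.ModEq.cancel_right_of_coprime hcop' this
        have h₁' := Finset.mem_range.mp h₁
        have h₂' := Finset.mem_range.mp h₂
        calc i₁ = i₁ % p := (Nat.mod_eq_of_lt h₁').symm
          _ = i₂ % p := this
          _ = i₂ := Nat.mod_eq_of_lt h₂'
      have hbij : ∏ i ∈ range p, φ (a ^ j * b ^ (i * j % p)) x
          = ∏ k ∈ range p, φ (a ^ j * b ^ k) x := by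
        refine Finset.prod_bij (fun i _ => i * j % p) hmaps
          (fun i₁ h₁ i₂ h₂ h => hinj i₁ h₁ i₂ h₂ h) ?_ (fun i _ => rfl)
        intro y hy
        obtain ⟨i, hi, hiy⟩ := Finset.surj_on_of_inj_on_of_card_le (fun i _ => i * j % p) hmaps
          (fun i₁ i₂ h₁ h₂ h => hinj i₁ h₁ i₂ h₂ h) le_rfl y hy
        exact ⟨i, hi, hiy.symm⟩
      rw [hbij]
      have : ∀ k : ℕ, φ (a ^ j * b ^ k) x = φ (a ^ j) (φ (b ^ k) x) := by
        intro k
        rw [map_mul φ, MulAut.mul_apply]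
      rw [Finset.prod_congr rfl fun k _ => this k, ← map_prod (φ (a ^ j)), hNb, map_one]
  rw [Finset.prod_congr rfl hinner, Finset.prod_ite_eq' (range p) 0 (fun _ => x ^ p),
    if_pos (Finset.mem_range.mpr hp0)] at h1
  -- conclude
  have hordp : orderOf x ∣ p := orderOf_dvd_of_pow_eq_one h1
  have hordV : orderOf x ∣ Nat.card V := orderOf_dvd_natCard x
  have hcp : Nat.Coprime p (Nat.card V) := Nat.Coprime.coprime_dvd_left hpA hcop
  have : orderOf x ∣ 1 := by
    have := Nat.dvd_gcd hordp hordV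
    rwa [Nat.Coprime.gcd_eq_one hcp] at this
  exact orderOf_eq_one_iff.mp (Nat.eq_one_of_dvd_one this)
end

section
/- Let G be a finite group, V a normal subgroup of G, and a ∈ G an element such that G = V⟨a⟩ and gcd(|V|, ord(a)) = 1. Suppose v ∈ V has the property that gcd(|V|, ord(av)) = 1. Then v ∈ [V,a], where [V,a] is the subgroup generated by all commutators [u,a] = u⁻¹a⁻¹ua with u ∈ V. -/
/-!
Let `N = [V, a]` (`V.commutatorWith a`). Conjugation by an element of `V` or by a power of `a`
maps each generator `[u, a]` into `N`, so `N` is normalized by `V ⊔ ⟨a⟩ = G` and is normal. In `G ⧸ N` the images of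
`a` and `v` commute, so the image of `v = a⁻¹ (a v)` has order dividing `ord(a) · ord(a v)`;
it also divides `|V|`, which is coprime to that product, hence `v ∈ N`.
-/

namespace Subgroup

variable {G : Type*} [Group G] {V : Subgroup G} {a : G}

def commutatorWith (V : Subgroup G) (a : G) : Subgroup G :=
  closure {x | ∃ u ∈ V, x = u⁻¹ * a⁻¹ * u * a}

theorem commutator_mem_commutatorWith {u : G} (hu : u ∈ V) :
    u⁻¹ * a⁻¹ * u * a ∈ V.commutatorWith a :=
  subset_closure ⟨u, hu, rfl⟩

theorem le_normalizer_commutatorWith : V ≤ normalizer (V.commutatorWith a) := by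
  refine le_normalizer_closure_iff.mpr ?_
  rintro w hw _ ⟨u, hu, rfl⟩
  have key : w * (u⁻¹ * a⁻¹ * u * a) * w⁻¹ =
      ((u * w⁻¹)⁻¹ * a⁻¹ * (u * w⁻¹) * a) * (w⁻¹⁻¹ * a⁻¹ * w⁻¹ * a)⁻¹ := by group
  rw [key]
  exact mul_mem (commutator_mem_commutatorWith (mul_mem hu (inv_mem hw)))
    (inv_mem (commutator_mem_commutatorWith (inv_mem hw)))

theorem zpowers_le_normalizer_commutatorWith (hV : V.Normal) :
    zpowers a ≤ normalizer (V.commutatorWith a) := by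
  refine le_normalizer_closure_iff.mpr ?_
  rintro _ ⟨k, rfl⟩ _ ⟨u, hu, rfl⟩
  have key : a ^ k * (u⁻¹ * a⁻¹ * u * a) * (a ^ k)⁻¹ =
      (a ^ k * u * (a ^ k)⁻¹)⁻¹ * a⁻¹ * (a ^ k * u * (a ^ k)⁻¹) * a := by group
  rw [key]
  exact commutator_mem_commutatorWith (hV.conj_mem u hu _)

theorem commutatorWith_normal (hV : V.Normal) (hgen : V ⊔ zpowers a = ⊤) :
    (V.commutatorWith a).Normal := by
  rw [← normalizer_eq_top_iff, eq_top_iff, ← hgen]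
  exact sup_le le_normalizer_commutatorWith (zpowers_le_normalizer_commutatorWith hV)

theorem commute_mk_of_mem [(V.commutatorWith a).Normal] {v : G} (hv : v ∈ V) :
    Commute (a : G ⧸ V.commutatorWith a) v := by
  change ((a * v : G) : G ⧸ V.commutatorWith a) = (v * a : G)
  rw [QuotientGroup.eq]
  simpa only [mul_inv_rev, mul_assoc] using commutator_mem_commutatorWith hv

end Subgroup

theorem eq_one_of_commute_of_coprime_orderOf {Q : Type*} [Group Q] {x y : Q} (h : Commute x y)
    (hx : (orderOf y).Coprime (orderOf x)) (hxy : (orderOf y).Coprime (orderOf (x * y))) :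
    y = 1 := by
  have hdvd : orderOf y ∣ orderOf x * orderOf (x * y) := by
    simpa only [inv_mul_cancel_left, orderOf_inv] using
      ((Commute.refl x).mul_right h).inv_left.orderOf_mul_dvd_mul_orderOf
  exact orderOf_eq_one_iff.mp ((hx.mul_right hxy).eq_one_of_dvd hdvd)

theorem mem_commutator_of_coprime_order_general
    (G : Type*) [Group G] (V : Subgroup G) (hV : V.Normal) (a : G)
    (hgen : V ⊔ Subgroup.zpowers a = ⊤)
    (hcop : Nat.Coprime (Nat.card V) (orderOf a))
    (v : G) (hv : v ∈ V)
    (hav : Nat.Coprime (Nat.card V) (orderOf (a * v))) :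
    v ∈ Subgroup.closure {x : G | ∃ u ∈ V, x = u⁻¹ * a⁻¹ * u * a} := by
  change v ∈ V.commutatorWith a
  have := Subgroup.commutatorWith_normal hV hgen
  let π := QuotientGroup.mk' (V.commutatorWith a)
  have hv_card : orderOf (π v) ∣ Nat.card V :=
    (orderOf_map_dvd π v).trans (V.orderOf_dvd_natCard hv)
  rw [← QuotientGroup.eq_one_iff]
  refine eq_one_of_commute_of_coprime_orderOf (Subgroup.commute_mk_of_mem hv) ?_ ?_
  · exact (hcop.coprime_dvd_left hv_card).coprime_dvd_right (orderOf_map_dvd π a)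
  · exact (hav.coprime_dvd_left hv_card).coprime_dvd_right (orderOf_map_dvd π (a * v))

/-- Let `G` be a finite group, `V` a normal subgroup of `G` and `a ∈ G`
with `G = V⟨a⟩` and `gcd(|V|, ord(a)) = 1`. If `v ∈ V` satisfies `gcd(|V|, ord(a*v)) = 1`,
then `v ∈ [V,a]`, the subgroup generated by all commutators `u⁻¹ * a⁻¹ * u * a` with
`u ∈ V`. -/
theorem mem_commutator_of_coprime_order
    (G : Type*) [Group G] [Finite G] (V : Subgroup G) (hV : V.Normal) (a : G)
    (hgen : V ⊔ Subgroup.zpowers a = ⊤)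
    (hcop : Nat.Coprime (Nat.card V) (orderOf a))
    (v : G) (hv : v ∈ V)
    (hav : Nat.Coprime (Nat.card V) (orderOf (a * v))) :
    v ∈ Subgroup.closure {x : G | ∃ u ∈ V, x = u⁻¹ * a⁻¹ * u * a} :=
  mem_commutator_of_coprime_order_general G V hV a hgen hcop v hv hav
end

section
/- Let P be a finite extraspecial p-group (that is, the centre Z(P) has order p and P/Z(P) is a nontrivial elementary abelian p-group), and let φ be an automorphism of P whose order is coprime to |P| and whose fixed-point subgroup C_P(φ) equals the Frattini subgroup Φ(P). Then every element g ∈ P \ Φ(P) is conjugate in P to an element of the form [x,φ] = x⁻¹·φ(x) for some x ∈ P. -/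
/-!
First `Φ(P) = Z(P)`. A maximal subgroup `M` not containing `Z(P)` meets it trivially, as
`|Z(P)| = p`, so `M` is abelian and centralises `M Z(P) = P`. Conversely, `P/Z(P)` is an
`𝔽_p`-vector space, so each noncentral element lies outside the kernel of some `P → ℤ/p`, which
is a maximal subgroup.

Since `P/Z(P)` is abelian, `x ↦ [x,φ] Z(P)` is a homomorphism `P → P/Z(P)`. If `[x,φ]` is central
it is fixed by `φ`, so `φⁿ(x) = x [x,φ]ⁿ` and coprimality gives `[x,φ] = 1`; thus the kernel is
`C_P(φ) = Z(P)` and the map is onto. Finally, for `g ∉ Z(P)`, `y ↦ [y⁻¹, g]` is a nontrivial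
homomorphism into `Z(P)`, which has prime order, so every element of `g Z(P)` is conjugate to `g`.
-/

open Subgroup
open scoped commutatorElement

section

variable {G : Type*} [Group G]

theorem Subgroup.eq_bot_or_eq_of_le_of_prime_card {H K : Subgroup G} (hHK : H ≤ K)
    (hK : (Nat.card K).Prime) : H = ⊥ ∨ H = K := by
  have : Finite K := Nat.finite_of_card_ne_zero hK.ne_zero
  rcases (Nat.dvd_prime hK).mp (card_dvd_of_le hHK) with h | h
  · exact .inl (card_eq_one.mp h)
  · exact .inr (eq_of_le_of_card_ge hHK h.ge)

theorem MonoidHom.isCoatom_ker_of_prime_card {H : Type*} [Group H] {f : G →* H}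
    (hH : (Nat.card H).Prime) (hf : f.ker ≠ ⊤) : IsCoatom f.ker := by
  refine ⟨hf, fun K hK => ?_⟩
  have : Fact (Nat.card H).Prime := ⟨hH⟩
  have hmap : K.map f = ⊤ :=
    (K.map f).eq_bot_or_eq_top_of_prime_card.resolve_left
      (fun h => hK.not_ge ((map_eq_bot_iff K).mp h))
  rw [← sup_eq_left.mpr hK.le, ← comap_map_eq, hmap, comap_top]

theorem frattini_le_ker_of_prime_card {H : Type*} [Group H] (f : G →* H)
    (hH : (Nat.card H).Prime) : frattini G ≤ f.ker := by
  by_cases hf : f.ker = ⊤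
  · exact hf ▸ le_top
  · exact frattini_le_coatom (f.isCoatom_ker_of_prime_card hH hf)

theorem exists_monoidHom_zmod_apply_ne_one {p : ℕ} [Fact p.Prime] {Q : Type*} [CommGroup Q]
    (hexp : ∀ q : Q, q ^ p = 1) {q : Q} (hq : q ≠ 1) :
    ∃ f : Q →* Multiplicative (ZMod p), f q ≠ 1 := by
  have : Module (ZMod p) (Additive Q) :=
    AddCommGroup.zmodModule fun x => congrArg Additive.ofMul (hexp x.toMul)
  obtain ⟨φ, hφ⟩ :=
    Module.Projective.exists_dual_ne_zero (ZMod p) (show Additive.ofMul q ≠ 0 from hq)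
  exact ⟨AddMonoidHom.toMultiplicativeRight φ.toAddMonoidHom, hφ⟩

abbrev QuotientGroup.commGroupOfCommutatorMem {N : Subgroup G} [N.Normal]
    (hcomm : ∀ x y : G, ⁅x, y⁆ ∈ N) : CommGroup (G ⧸ N) where
  mul_comm := by
    rintro ⟨a⟩ ⟨b⟩
    refine QuotientGroup.eq.mpr ?_
    simpa [commutatorElement_def, mul_assoc] using hcomm b⁻¹ a⁻¹

theorem frattini_le_of_commutator_mem_of_pow_mem {p : ℕ} [Fact p.Prime] {N : Subgroup G}
    [N.Normal] (hcomm : ∀ x y : G, ⁅x, y⁆ ∈ N) (hpow : ∀ x : G, x ^ p ∈ N) :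
    frattini G ≤ N := by
  intro g hg
  by_contra hgN
  let _ := QuotientGroup.commGroupOfCommutatorMem hcomm
  have hexp : ∀ q : G ⧸ N, q ^ p = 1 := by
    rintro ⟨x⟩
    exact (QuotientGroup.eq_one_iff _).mpr (hpow x)
  obtain ⟨f, hf⟩ := exists_monoidHom_zmod_apply_ne_one hexp
    (mt (QuotientGroup.eq_one_iff g).mp hgN)
  have hcard : (Nat.card (Multiplicative (ZMod p))).Prime := by
    simpa using Fact.out (p := p.Prime)
  exact hf (frattini_le_ker_of_prime_card (f.comp (QuotientGroup.mk' N)) hcard hg)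

theorem center_le_of_isCoatom (hZ : (Nat.card (center G)).Prime) (hG : center G ≠ ⊤)
    (hcomm : ∀ x y : G, ⁅x, y⁆ ∈ center G) {M : Subgroup G} (hM : IsCoatom M) :
    center G ≤ M := by
  by_contra hZM
  have hsup : M ⊔ center G = ⊤ := hM.2 _ (left_lt_sup.mpr hZM)
  have hMZ : M ⊓ center G = ⊥ :=
    (eq_bot_or_eq_of_le_of_prime_card inf_le_right hZ).resolve_right
      (fun h => hZM (inf_eq_right.mp h))
  have hMcomm : M ≤ centralizer M := fun m hm n hn => by
    have : ⁅n, m⁆ ∈ M ⊓ center G :=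
      ⟨M.mul_mem (M.mul_mem (M.mul_mem hn hm) (M.inv_mem hn)) (M.inv_mem hm), hcomm n m⟩
    rw [hMZ, mem_bot] at this
    exact commutatorElement_eq_one_iff_mul_comm.mp this
  have hMcenter : M ≤ center G := by
    rw [← centralizer_univ, ← coe_top, ← le_centralizer_iff, ← hsup]
    exact sup_le hMcomm (center_le_centralizer _)
  exact hG (top_le_iff.mp (hsup ▸ sup_le hMcenter le_rfl))

theorem center_le_frattini (hZ : (Nat.card (center G)).Prime) (hG : center G ≠ ⊤)
    (hcomm : ∀ x y : G, ⁅x, y⁆ ∈ center G) : center G ≤ frattini G :=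
  le_iInf₂ fun _ hM => center_le_of_isCoatom hZ hG hcomm hM

theorem MulAut.apply_eq_self_of_coprime {φ : MulAut G}
    (hφ : (orderOf φ).Coprime (Nat.card G)) {x : G} (hx : φ (x⁻¹ * φ x) = x⁻¹ * φ x) :
    φ x = x := by
  set z := x⁻¹ * φ x
  have hxz : x * z = φ x := mul_inv_cancel_left x (φ x)
  have hiter : ∀ n : ℕ, (φ ^ n) x = x * z ^ n := by
    intro n
    induction n with
    | zero => simp
    | succ n ih =>
      rw [pow_succ', mul_apply, ih, map_mul, map_pow, hx, pow_succ', ← mul_assoc, hxz]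
  have hz : z = 1 := by
    refine (pow_eq_one_iff_of_coprime hφ).mp ⟨?_, pow_card_eq_one'⟩
    simpa [pow_orderOf_eq_one] using (hiter (orderOf φ)).symm
  rw [← hxz, hz, mul_one]

theorem MulAut.surjective_mk_inv_mul_apply [Finite G] {N : Subgroup G} [N.Normal]
    (hcomm : ∀ x y : G, ⁅x, y⁆ ∈ N) {φ : MulAut G} (hφ : (orderOf φ).Coprime (Nat.card G))
    (hfix : ∀ x : G, φ x = x ↔ x ∈ N) :
    Function.Surjective fun x : G => ((x⁻¹ * φ x : G) : G ⧸ N) := by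
  let _ := QuotientGroup.commGroupOfCommutatorMem hcomm
  let F : G →* G ⧸ N := (QuotientGroup.mk' N).comp φ.toMonoidHom / QuotientGroup.mk' N
  have hF : ∀ x, F x = ((x⁻¹ * φ x : G) : G ⧸ N) := fun x => by
    simp [F, div_eq_inv_mul]
  have hker : F.ker = N := by
    ext x
    rw [MonoidHom.mem_ker, hF, QuotientGroup.eq_one_iff, ← hfix, ← hfix]
    exact ⟨fun h => φ.apply_eq_self_of_coprime hφ h, fun h => by rw [h, inv_mul_cancel, map_one]⟩
  have hrange : F.range = ⊤ := by
    refine eq_top_of_card_eq _ ?_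
    rw [← index_ker, hker, index]
  intro q
  obtain ⟨x, hx⟩ := hrange ▸ mem_top q
  exact ⟨x, (hF x).symm.trans hx⟩

theorem exists_conj_eq_mul_of_notMem_center (hZ : (Nat.card (center G)).Prime)
    (hcomm : ∀ x y : G, ⁅x, y⁆ ∈ center G) {g : G} (hg : g ∉ center G) {z : G}
    (hz : z ∈ center G) : ∃ y : G, y⁻¹ * g * y = g * z := by
  let c : G →* G := MonoidHom.mk' (fun y => ⁅y⁻¹, g⁆) fun a b => by
    calc ⁅(a * b)⁻¹, g⁆ = b⁻¹ * ⁅a⁻¹, g⁆ * (g * b * g⁻¹) := by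
          simp only [commutatorElement_def]; group
      _ = ⁅a⁻¹, g⁆ * ⁅b⁻¹, g⁆ := by
          rw [mem_center_iff.mp (hcomm a⁻¹ g) b⁻¹]
          simp only [commutatorElement_def]; group
  have hrange : c.range ≠ ⊥ := fun h => hg <| mem_center_iff.mpr fun y => by
    simpa [c, commutatorElement_eq_one_iff_mul_comm] using
      DFunLike.congr_fun (MonoidHom.range_eq_bot_iff.mp h) y⁻¹
  have hcenter : c.range = center G :=
    (eq_bot_or_eq_of_le_of_prime_card (by rintro _ ⟨y, rfl⟩; exact hcomm _ _) hZ).resolve_left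
      hrange
  obtain ⟨y, hy⟩ := hcenter ▸ hz
  refine ⟨y, ?_⟩
  rw [mem_center_iff.mp hz g, ← hy]
  simp [c, commutatorElement_def]

end

theorem conj_commutator_of_extraspecial_coprime_aut_general
    (p : ℕ) (hp : p.Prime) (P : Type*) [Group P] [Finite P]
    (hcenter : Nat.card (Subgroup.center P) = p)
    (hnontriv : Subgroup.center P ≠ ⊤)
    (habelian : ∀ x y : P, x * y * x⁻¹ * y⁻¹ ∈ Subgroup.center P)
    (hexp : ∀ x : P, x ^ p ∈ Subgroup.center P)
    (φ : MulAut P)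
    (hcop : Nat.Coprime (orderOf φ) (Nat.card P))
    (hfix : ∀ x : P, φ x = x ↔ x ∈ frattini P) :
    ∀ g : P, g ∉ frattini P → ∃ x y : P, y⁻¹ * g * y = x⁻¹ * φ x := by
  intro g hg
  have : Fact p.Prime := ⟨hp⟩
  have hZ : (Nat.card (center P)).Prime := hcenter ▸ hp
  have hΦ : frattini P = center P :=
    le_antisymm (frattini_le_of_commutator_mem_of_pow_mem habelian hexp)
      (center_le_frattini hZ hnontriv habelian)
  rw [hΦ] at hg hfix
  obtain ⟨x, hx⟩ := φ.surjective_mk_inv_mul_apply habelian hcop hfix (g : P ⧸ center P)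
  obtain ⟨y, hy⟩ :=
    exists_conj_eq_mul_of_notMem_center hZ habelian hg (QuotientGroup.eq.mp hx.symm)
  exact ⟨x, y, hy.trans (mul_inv_cancel_left g _)⟩

/-- Let `P` be a finite extraspecial `p`-group (its centre has order `p`
and `P/Z(P)` is a nontrivial elementary abelian `p`-group) and let `φ` be an automorphism
of `P` of order coprime to `|P|` whose fixed-point subgroup equals the Frattini subgroup
`Φ(P)`. Then every element of `P \ Φ(P)` is conjugate in `P` to an element of the form
`[x,φ] = x⁻¹ * φ(x)`. -/
theorem conj_commutator_of_extraspecial_coprime_aut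
    (p : ℕ) (hp : p.Prime) (P : Type*) [Group P] [Finite P]
    (hP : IsPGroup p P)
    (hcenter : Nat.card (Subgroup.center P) = p)
    (hnontriv : Subgroup.center P ≠ ⊤)
    (habelian : ∀ x y : P, x * y * x⁻¹ * y⁻¹ ∈ Subgroup.center P)
    (hexp : ∀ x : P, x ^ p ∈ Subgroup.center P)
    (φ : MulAut P)
    (hcop : Nat.Coprime (orderOf φ) (Nat.card P))
    (hfix : ∀ x : P, φ x = x ↔ x ∈ frattini P) :
    ∀ g : P, g ∉ frattini P → ∃ x y : P, y⁻¹ * g * y = x⁻¹ * φ x :=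
  conj_commutator_of_extraspecial_coprime_aut_general p hp P hcenter hnontriv habelian hexp φ hcop
    hfix
end

section
/- Let G be a finite group containing subgroups P₁, P₂, P₃ and primes p₁, p₂, p₃ with p₁ ≠ p₂ and p₂ ≠ p₃, such that: each Pᵢ is a pᵢ-group; P₁ normalizes P₂ and P₃, and P₂ normalizes P₃; P₃ ≠ 1; P₂ does not centralize P₃ (so P₂/C_{P₂}(P₃) ≠ 1); and the image of P₁ in its action on P₂/C_{P₂}(P₃) is nontrivial. Suppose moreover that P₁ is cyclic, P₂ and P₃ are abelian, P₂ is noncyclic, and P₂ = [P₂,P₁]. Then G has a commutator [x,y] whose order is not a prime power. -/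
/-!
Let `a` generate `P₁`. By the three subgroups lemma `a` does not centralize `P₃`, so
`e = ⁅a⁻¹, c⁆` is a nontrivial `p₃`-element of `P₃` for some `c ∈ P₃`. The noncyclic abelian
`p₂`-group `P₂` contains a subgroup `⟨s, t⟩ ≅ C_{p₂} × C_{p₂}`. If the norm
`N_u(e) = ∏_{i < p₂} u^i e u^{-i}` were trivial for every `u` of order `p₂`, multiplying these norms
over the `p₂ + 1` cyclic subgroups of `⟨s, t⟩` would give `e^{p₂} · N_{⟨s,t⟩}(e) = 1` with
`N_{⟨s,t⟩}(e) = N_s(N_t(e)) = 1`, i.e. `e^{p₂} = 1`. So some `u ∈ P₂` of order `p₂` has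
`(e u)^{p₂} = N_u(e) ≠ 1`. Since `P₂` is abelian and `P₂ = ⁅P₂, ⟨a⟩⁆`, the map `b ↦ b⁻¹ a⁻¹ b a`
is onto `P₂`, so `u = b⁻¹ a⁻¹ b a` with `b ∈ P₂`; then the commutator of `b c` and `a` is
conjugate to `e u`, whose order is divisible by both `p₂` and `p₃`.
-/

open Finset Subgroup
open scoped IsMulCommutative commutatorElement

lemma ZMod.prod_val_eq_prod_range {N : Type*} [CommMonoid N] (p : ℕ) [NeZero p] (f : ℕ → N) :
    ∏ i : ZMod p, f i.val = ∏ i ∈ range p, f i := by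
  obtain ⟨n, rfl⟩ := Nat.exists_eq_succ_of_ne_zero (NeZero.ne p)
  exact Fin.prod_univ_eq_prod_range f (n + 1)

/-- The lines `j = m * i` together with the line `i = 0` cover every point of `F × F` once,
except the origin, which they cover `card F + 1` times. -/
lemma prod_lines_mul_prod_eq {F N : Type*} [Field F] [Fintype F] [DecidableEq F] [CommMonoid N]
    (f : F → F → N) :
    (∏ m, ∏ i, f i (m * i)) * ∏ j, f 0 j = f 0 0 ^ Fintype.card F * ∏ i, ∏ j, f i j := by
  have hrow : ∀ i ∈ ({0}ᶜ : Finset F), ∏ m, f i (m * i) = ∏ j, f i j := fun i hi =>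
    Fintype.prod_equiv (Equiv.mulRight₀ i (by simpa using hi)) _ _ fun _ => rfl
  rw [prod_comm, Fintype.prod_eq_mul_prod_compl 0 (fun i => ∏ m, f i (m * i)),
    Fintype.prod_eq_mul_prod_compl 0 (fun i => ∏ j, f i j), prod_congr rfl hrow]
  simp only [mul_zero, prod_const, card_univ]
  ac_rfl

section CyclicNorm

variable {V M : Type*} [Monoid V] [CommGroup M] [MulDistribMulAction V M]

def cyclicNorm (n : ℕ) (v : V) (x : M) : M :=
  ∏ i ∈ range n, v ^ i • x

lemma cyclicNorm_succ (n : ℕ) (v : V) (x : M) :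
    cyclicNorm (n + 1) v x = x * v • cyclicNorm n v x := by
  simp only [cyclicNorm, prod_range_succ', pow_zero, one_smul, smul_prod', pow_succ', mul_smul]
  exact mul_comm _ _

lemma inv_mul_smul_cyclicNorm (n : ℕ) (v : V) (x : M) :
    (cyclicNorm n v x)⁻¹ * v • cyclicNorm n v x = x⁻¹ * v ^ n • x := by
  have h := prod_range_div (fun i => v ^ i • x) n
  simp only [pow_succ', mul_smul, pow_zero, one_smul] at h
  rw [cyclicNorm, inv_mul_eq_div, inv_mul_eq_div, smul_prod', ← prod_div_distrib, h]

lemma pow_eq_one_of_cyclicNorm_eq_one {p : ℕ} [Fact p.Prime] {s t : V} (hst : Commute s t)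
    (ht : t ^ p = 1) {x : M} (hxt : cyclicNorm p t x = 1)
    (hx : ∀ m : ℕ, cyclicNorm p (s * t ^ m) x = 1) : x ^ p = 1 := by
  classical
  set f : ZMod p → ZMod p → M := fun i j => (s ^ i.val * t ^ j.val) • x
  have hline : ∀ m : ZMod p, ∏ i, f i (m * i) = 1 := by
    intro m
    rw [← hx m.val, cyclicNorm, ← ZMod.prod_val_eq_prod_range]
    refine prod_congr rfl fun i _ => ?_
    rw [(hst.pow_right m.val).mul_pow, ← pow_mul, pow_eq_pow_mod _ ht, ← ZMod.val_mul]
  have hrow : ∀ i : ZMod p, ∏ j, f i j = 1 := by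
    intro i
    simp only [f, mul_smul, ← smul_prod']
    rw [ZMod.prod_val_eq_prod_range p (fun j => t ^ j • x), ← cyclicNorm, hxt, smul_one]
  have h := prod_lines_mul_prod_eq f
  rw [prod_congr rfl fun m _ => hline m, hrow 0, prod_congr rfl fun i _ => hrow i] at h
  simpa [f] using h.symm

end CyclicNorm

section NoncyclicPGroup

variable {α : Type*} [CommGroup α] [Finite α]

lemma exists_pow_eq_one_mul_inv_mem_zpowers {p : ℕ} {x y : α}
    (hx : orderOf x = Monoid.exponent α) (hp : p ∣ orderOf x) (hy : y ^ p ∈ zpowers x) :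
    ∃ z : α, z ^ p = 1 ∧ y * z⁻¹ ∈ zpowers x := by
  obtain ⟨n, hn⟩ := mem_zpowers_iff.mp hy
  obtain ⟨e, he⟩ := hp
  have he0 : (e : ℤ) ≠ 0 := by exact_mod_cast right_ne_zero_of_mul (he ▸ (orderOf_pos x).ne')
  -- `x ^ (n * e) = y ^ (p * e) = 1`, as `p * e` is the exponent of `α`
  have hdvd : (p : ℤ) * e ∣ n * e := by
    rw [← Nat.cast_mul, ← he, orderOf_dvd_iff_zpow_eq_one, zpow_mul, hn, zpow_natCast, ← pow_mul,
      ← he, hx, Monoid.pow_exponent_eq_one]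
  obtain ⟨m, rfl⟩ := Int.dvd_of_mul_dvd_mul_right he0 hdvd
  refine ⟨y * (x ^ m)⁻¹, ?_, ?_⟩
  · rw [mul_pow, inv_pow, ← zpow_natCast (x ^ m), ← zpow_mul, mul_comm m, hn, mul_inv_cancel]
  · simp [zpow_mem (mem_zpowers x) m]

lemma exists_pow_eq_one_notMem_zpowers {p : ℕ} [hp : Fact p.Prime] (hα : IsPGroup p α)
    (hnc : ¬ IsCyclic α) : ∃ s t : α, s ^ p = 1 ∧ t ^ p = 1 ∧ t ≠ 1 ∧ s ∉ zpowers t := by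
  obtain ⟨x, hx⟩ := Monoid.exists_orderOf_eq_exponent (Monoid.ExponentExists.of_finite (G := α))
  have : Nontrivial (α ⧸ zpowers x) :=
    QuotientGroup.nontrivial_iff.mpr fun h => hnc (isCyclic_iff_exists_zpowers_eq_top.mpr ⟨x, h⟩)
  obtain ⟨k, hk, hcard⟩ := (hα.to_quotient (zpowers x)).nontrivial_iff_card.mp this
  obtain ⟨y', hy'⟩ := exists_prime_orderOf_dvd_card' p (hcard ▸ dvd_pow_self p hk.ne')
  obtain ⟨y, rfl⟩ := QuotientGroup.mk_surjective y'
  have hy : y ∉ zpowers x := by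
    rw [← QuotientGroup.eq_one_iff, ← orderOf_eq_one_iff, hy']
    exact hp.out.ne_one
  have hyp : y ^ p ∈ zpowers x := by
    rw [← QuotientGroup.eq_one_iff, QuotientGroup.mk_pow, ← hy', pow_orderOf_eq_one]
  have hpx : p ∣ orderOf x :=
    hx ▸ (hα.dvd_orderOf (by rintro rfl; exact hy (one_mem _))).trans (Monoid.order_dvd_exponent y)
  obtain ⟨z, hz, hyz⟩ := exists_pow_eq_one_mul_inv_mem_zpowers hx hpx hyp
  obtain ⟨ht, ht1⟩ := orderOf_eq_prime_iff.mp (orderOf_pow_orderOf_div (orderOf_pos x).ne' hpx)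
  refine ⟨z, x ^ (orderOf x / p), hz, ht, ht1, fun hzt => hy ?_⟩
  have hzx : z ∈ zpowers x := zpowers_le.mpr (pow_mem (mem_zpowers x) _) hzt
  exact (mul_mem_cancel_right (inv_mem hzx)).mp hyz

end NoncyclicPGroup

lemma exists_cyclicNorm_ne_one {V M : Type*} [CommGroup V] [Finite V] [CommGroup M]
    [MulDistribMulAction V M] {p : ℕ} [Fact p.Prime] (hV : IsPGroup p V) (hnc : ¬ IsCyclic V)
    {x : M} (hx : x ^ p ≠ 1) : ∃ v : V, v ^ p = 1 ∧ v ≠ 1 ∧ cyclicNorm p v x ≠ 1 := by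
  obtain ⟨s, t, hs, ht, ht1, hst⟩ := exists_pow_eq_one_notMem_zpowers hV hnc
  by_contra! h
  refine hx (pow_eq_one_of_cyclicNorm_eq_one (Commute.all s t) ht (h t ht ht1) fun m => h _ ?_ ?_)
  · rw [mul_pow, hs, pow_right_comm, ht, one_pow, one_mul]
  · intro h1
    exact hst (eq_inv_of_mul_eq_one_left h1 ▸ inv_mem (pow_mem (mem_zpowers t) m))

section Conjugation

variable {G : Type*} [Group G]

@[simp] lemma Subgroup.coe_normalizer_smul {H : Subgroup G} (u : normalizer (H : Set G)) (x : H) :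
    ((u • x : H) : G) = u * x * u⁻¹ :=
  rfl

lemma mul_pow_eq_cyclicNorm_mul_pow {H : Subgroup G} [IsMulCommutative H]
    (u : normalizer (H : Set G)) (x : H) (n : ℕ) :
    ((x : G) * u) ^ n = ((cyclicNorm n u x : H) : G) * (u : G) ^ n := by
  induction n with
  | zero => simp [cyclicNorm]
  | succ n ih =>
    rw [pow_succ', ih, cyclicNorm_succ]
    simp only [Subgroup.coe_mul, coe_normalizer_smul, InvMemClass.coe_inv]
    group

lemma exists_mul_pow_ne_one {H K : Subgroup G} [IsMulCommutative H] [IsMulCommutative K] [Finite K]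
    {p : ℕ} [Fact p.Prime] (hK : IsPGroup p K) (hnc : ¬ IsCyclic K)
    (hKH : K ≤ normalizer (H : Set G)) {x : H} (hx : x ^ p ≠ 1) :
    ∃ u ∈ K, u ^ p = 1 ∧ u ≠ 1 ∧ ((x : G) * u) ^ p ≠ 1 := by
  let _ : MulDistribMulAction K H := MulDistribMulAction.compHom H (inclusion hKH)
  obtain ⟨u, hup, hu1, hNu⟩ := exists_cyclicNorm_ne_one hK hnc hx
  have hup' : (u : G) ^ p = 1 := by exact_mod_cast hup
  have hnorm : cyclicNorm p (inclusion hKH u) x = cyclicNorm p u x := by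
    simp only [cyclicNorm, ← map_pow]
    rfl
  refine ⟨u, u.2, hup', by simpa using hu1, ?_⟩
  have h := mul_pow_eq_cyclicNorm_mul_pow (inclusion hKH u) x p
  rw [hnorm] at h
  simp only [coe_inclusion] at h
  rw [h, hup', mul_one]
  exact_mod_cast hNu

lemma mul_pow_mul_inv_pow_mem {H : Subgroup G} {x u : G} (hx : x ∈ H)
    (hu : u ∈ normalizer (H : Set G)) (n : ℕ) : (x * u) ^ n * (u ^ n)⁻¹ ∈ H := by
  induction n with
  | zero => simp
  | succ n ih =>
    have hconj : u ^ n * x * (u ^ n)⁻¹ ∈ H := (mem_normalizer_iff.mp (pow_mem hu n) x).mp hx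
    have h := mul_mem ih hconj
    rwa [show (x * u) ^ n * (u ^ n)⁻¹ * (u ^ n * x * (u ^ n)⁻¹) = (x * u) ^ (n + 1) * (u ^ (n + 1))⁻¹
      by rw [pow_succ, pow_succ]; group] at h

lemma not_exists_prime_pow_orderOf_mul {H K : Subgroup G} {p q : ℕ} [hp : Fact p.Prime]
    [hq : Fact q.Prime] (hpq : p ≠ q) (hK : IsPGroup p K) (hH : IsPGroup q H) {x u : G}
    (hx : x ∈ H) (hu : u ∈ K) (huH : u ∈ normalizer (H : Set G)) (hu1 : u ≠ 1) (hup : u ^ p = 1)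
    (hxu : (x * u) ^ p ≠ 1) : ¬ ∃ r k : ℕ, r.Prime ∧ orderOf (x * u) = r ^ k := by
  have hp_dvd : p ∣ orderOf (x * u) := by
    have hinv := mul_pow_mul_inv_pow_mem hx huH (orderOf (x * u))
    rw [pow_orderOf_eq_one, one_mul, inv_mem_iff] at hinv
    have h1 := disjoint_def.mp (IsPGroup.disjoint_of_ne p q hpq K H hK hH) (pow_mem hu _) hinv
    have hdvd := hK.dvd_orderOf (g := ⟨u, hu⟩) (by simpa using hu1)
    rw [Subgroup.orderOf_mk] at hdvd
    exact hdvd.trans (orderOf_dvd_of_pow_eq_one h1)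
  have hq_dvd : q ∣ orderOf (x * u) := by
    have hmem : (x * u) ^ p ∈ H := by simpa [hup] using mul_pow_mul_inv_pow_mem hx huH p
    have hdvd := hH.dvd_orderOf (g := ⟨_, hmem⟩) (by simpa using hxu)
    rw [Subgroup.orderOf_mk] at hdvd
    exact hdvd.trans (orderOf_pow_dvd p)
  rintro ⟨r, k, hr, hk⟩
  rw [hk] at hp_dvd hq_dvd
  exact hpq (((Nat.prime_dvd_prime_iff_eq hp.out hr).mp (hp.out.dvd_of_dvd_pow hp_dvd)).trans
    ((Nat.prime_dvd_prime_iff_eq hq.out hr).mp (hq.out.dvd_of_dvd_pow hq_dvd)).symm)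

/-- The map `b ↦ b⁻¹ * a⁻¹ * b * a` is a homomorphism on the abelian group `P`, and the
commutator `⁅g, a⁻¹ ^ n⁆` is its value at the cyclic norm of `g⁻¹` under conjugation by `a⁻¹`. -/
lemma exists_inv_mul_inv_mul_mul_eq {P : Subgroup G} [IsMulCommutative P] {a : G}
    (ha : a ∈ normalizer (P : Set G)) (ha' : IsOfFinOrder a) (hP : ⁅P, zpowers a⁆ = P) {v : G}
    (hv : v ∈ P) : ∃ b ∈ P, b⁻¹ * a⁻¹ * b * a = v := by
  set α : normalizer (P : Set G) := ⟨a⁻¹, inv_mem ha⟩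
  let φ : P →* P := (MonoidHom.id P)⁻¹ * MulDistribMulAction.toMonoidHom P α
  have hφ : ∀ b : P, φ b = b⁻¹ * α • b := fun _ => rfl
  suffices ⁅P, zpowers a⁆ ≤ φ.range.map P.subtype by
    obtain ⟨_, ⟨b, rfl⟩, rfl⟩ := this (hP.symm ▸ hv)
    refine ⟨b, b.2, ?_⟩
    simp only [subtype_apply, hφ, Subgroup.coe_mul, InvMemClass.coe_inv, coe_normalizer_smul,
      inv_inv, α]
    group
  rw [commutator_le]
  intro g hg h hh
  rw [← zpowers_inv, ← ha'.inv.mem_powers_iff_mem_zpowers] at hh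
  obtain ⟨n, rfl⟩ := hh
  refine ⟨_, ⟨cyclicNorm n α (⟨g, hg⟩ : P)⁻¹, rfl⟩, ?_⟩
  simp only [subtype_apply, hφ, inv_mul_smul_cyclicNorm, inv_inv, SubmonoidClass.mk_pow, inv_pow,
    smul_inv', Subgroup.coe_mul, InvMemClass.coe_inv, coe_normalizer_smul, commutatorElement_def, α]
  group

lemma commutator_le_centralizer_of_le_centralizer {H₁ H₂ H₃ : Subgroup G}
    (h₁₃ : H₁ ≤ centralizer (H₃ : Set G)) (h₂₃ : H₂ ≤ normalizer (H₃ : Set G)) :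
    ⁅H₂, H₁⁆ ≤ centralizer (H₃ : Set G) := by
  have h13 : ⁅H₁, H₃⁆ = ⊥ := commutator_eq_bot_iff_le_centralizer.mpr h₁₃
  rw [← commutator_eq_bot_iff_le_centralizer]
  refine commutator_commutator_eq_bot_of_rotate ?_ ?_
  · rw [h13, commutator_bot_left]
  · rw [eq_bot_iff, ← h13, commutator_comm H₁]
    exact commutator_mono (le_normalizer_iff_commutator_le_left.mp h₂₃) le_rfl

end Conjugation

theorem exists_commutator_not_prime_power_of_abelian_tower_general
    (G : Type*) [Group G] [Finite G]
    (P₁ P₂ P₃ : Subgroup G) (p₂ p₃ : ℕ)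
    (hp₂ : p₂.Prime) (hp₃ : p₃.Prime)
    (h23 : p₂ ≠ p₃)
    (hP2 : IsPGroup p₂ P₂) (hP3 : IsPGroup p₃ P₃)
    (hn12 : P₁ ≤ Subgroup.normalizer (P₂ : Set G)) (hn13 : P₁ ≤ Subgroup.normalizer (P₃ : Set G))
    (hn23 : P₂ ≤ Subgroup.normalizer (P₃ : Set G))
    (hP2nc : ¬ P₂ ≤ Subgroup.centralizer (P₃ : Set G))
    (hP1cyc : IsCyclic P₁)
    (hP2ab : ∀ x ∈ P₂, ∀ y ∈ P₂, x * y = y * x)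
    (hP3ab : ∀ x ∈ P₃, ∀ y ∈ P₃, x * y = y * x)
    (hP2noncyc : ¬ IsCyclic P₂)
    (hP2eq : ⁅P₂, P₁⁆ = P₂) :
    ∃ x y : G, ¬ ∃ p k : ℕ, p.Prime ∧ orderOf (x⁻¹ * y⁻¹ * x * y) = p ^ k := by
  have := Fact.mk hp₂
  have := Fact.mk hp₃
  have : IsMulCommutative P₂ := ⟨⟨fun x y => Subtype.ext (hP2ab x x.2 y y.2)⟩⟩
  have : IsMulCommutative P₃ := ⟨⟨fun x y => Subtype.ext (hP3ab x x.2 y y.2)⟩⟩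
  obtain ⟨a, rfl⟩ := P₁.isCyclic_iff_exists_zpowers_eq_top.mp hP1cyc
  obtain ⟨c, hc, hca⟩ : ∃ c ∈ P₃, ¬ Commute c a := by
    by_contra! h
    exact hP2nc (hP2eq ▸ commutator_le_centralizer_of_le_centralizer
      (zpowers_le.mpr (mem_centralizer_iff.mpr h)) hn23)
  let e : P₃ := ⟨⁅a⁻¹, c⁆, mul_mem
    ((mem_normalizer_iff.mp (inv_mem (hn13 (mem_zpowers a))) c).mp hc) (inv_mem hc)⟩
  have he : e ≠ 1 := fun h => hca (Commute.inv_left_iff.mp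
    (commutatorElement_eq_one_iff_commute.mp (congrArg Subtype.val h))).symm
  have hep : e ^ p₂ ≠ 1 := by
    simpa using (hP3.powEquiv ((Nat.coprime_primes hp₃ hp₂).mpr h23.symm)).injective.ne he
  obtain ⟨u, hu, hup, hu1, heu⟩ := exists_mul_pow_ne_one hP2 hP2noncyc hn23 hep
  obtain ⟨b, -, hbu⟩ :=
    exists_inv_mul_inv_mul_mul_eq (hn12 (mem_zpowers a)) (isOfFinOrder_of_finite a) hP2eq hu
  refine ⟨b * c, a, ?_⟩
  have hconj : SemiconjBy (u⁻¹ * c) ((b * c)⁻¹ * a⁻¹ * (b * c) * a) (⁅a⁻¹, c⁆ * u) := by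
    rw [SemiconjBy, ← hbu, commutatorElement_def]
    group
  rw [hconj.orderOf_eq]
  exact not_exists_prime_pow_orderOf_mul h23 hP2 hP3 e.2 hu (hn23 hu) hu1 hup heu

/-- Let `G` be a finite group containing a tower `(P₁,P₂,P₃)` of abelian
subgroups (`Pᵢ` a `pᵢ`-group, `P₁` normalizing `P₂` and `P₃`, `P₂` normalizing `P₃`,
`P₃ ≠ 1`, `P₂` not centralizing `P₃`, the action of `P₁` on `P₂/C_{P₂}(P₃)` nontrivial,
`p₁ ≠ p₂`, `p₂ ≠ p₃`) with `P₁` cyclic, `P₂` noncyclic and `P₂ = [P₂,P₁]`. Then `G` has a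
commutator whose order is not a prime power. -/
theorem exists_commutator_not_prime_power_of_abelian_tower
    (G : Type*) [Group G] [Finite G]
    (P₁ P₂ P₃ : Subgroup G) (p₁ p₂ p₃ : ℕ)
    (hp₁ : p₁.Prime) (hp₂ : p₂.Prime) (hp₃ : p₃.Prime)
    (h12 : p₁ ≠ p₂) (h23 : p₂ ≠ p₃)
    (hP1 : IsPGroup p₁ P₁) (hP2 : IsPGroup p₂ P₂) (hP3 : IsPGroup p₃ P₃)
    (hn12 : P₁ ≤ Subgroup.normalizer (P₂ : Set G)) (hn13 : P₁ ≤ Subgroup.normalizer (P₃ : Set G))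
    (hn23 : P₂ ≤ Subgroup.normalizer (P₃ : Set G))
    (hP3ne : P₃ ≠ ⊥)
    (hP2nc : ¬ P₂ ≤ Subgroup.centralizer (P₃ : Set G))
    (hP1act : ∃ a ∈ P₁, ∃ b ∈ P₂, b⁻¹ * a⁻¹ * b * a ∉ Subgroup.centralizer (P₃ : Set G))
    (hP1cyc : IsCyclic P₁)
    (hP2ab : ∀ x ∈ P₂, ∀ y ∈ P₂, x * y = y * x)
    (hP3ab : ∀ x ∈ P₃, ∀ y ∈ P₃, x * y = y * x)
    (hP2noncyc : ¬ IsCyclic P₂)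
    (hP2eq : ⁅P₂, P₁⁆ = P₂) :
    ∃ x y : G, ¬ ∃ p k : ℕ, p.Prime ∧ orderOf (x⁻¹ * y⁻¹ * x * y) = p ^ k :=
  exists_commutator_not_prime_power_of_abelian_tower_general G P₁ P₂ P₃ p₂ p₃ hp₂ hp₃ h23 hP2 hP3
    hn12 hn13 hn23 hP2nc hP1cyc hP2ab hP3ab hP2noncyc hP2eq
end

section
/- Let G be a group isomorphic to the quaternion group Q₈ of order 8 and let φ be an automorphism of G of order 2. Then there exists an element u ∈ G such that [u,φ] = u⁻¹·φ(u) is the unique involution of G (the unique element of order 2). -/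
open QuaternionGroup in
private def q8app (x y : QuaternionGroup 2) : QuaternionGroup 2 → QuaternionGroup 2
  | .a i => x ^ i.val
  | .xa i => y * x ^ i.val

open QuaternionGroup in
private lemma q8key : ∀ x y : QuaternionGroup 2,
    q8app x y x = a 1 → q8app x y y = xa 0 → ¬(x = a 1 ∧ y = xa 0) →
    ∃ u : QuaternionGroup 2, u⁻¹ * q8app x y u = a 2 := by decide

open QuaternionGroup in
private lemma q8uniq : ∀ z : QuaternionGroup 2, z ≠ 1 → z * z = 1 → z = a 2 := by decide

open QuaternionGroup in
private lemma q8psi_eq (ψ : MulAut (QuaternionGroup 2)) (g : QuaternionGroup 2) :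
    ψ g = q8app (ψ (a 1)) (ψ (xa 0)) g := by
  cases g with
  | a i =>
      have : (a i : QuaternionGroup 2) = (a 1) ^ i.val := by
        rw [a_one_pow]
        congr 1
        simp [ZMod.natCast_val, ZMod.cast_id]
      conv_lhs => rw [this, map_pow]
      rfl
  | xa i =>
      have : (xa i : QuaternionGroup 2) = xa 0 * (a 1) ^ i.val := by
        rw [a_one_pow, xa_mul_a]
        congr 1
        simp [ZMod.natCast_val, ZMod.cast_id]
      conv_lhs => rw [this, map_mul, map_pow]
      rfl

/-- Let `G` be a group isomorphic to the quaternion group `Q₈` and let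
`φ` be an automorphism of `G` of order 2. Then there is `u ∈ G` such that
`[u,φ] = u⁻¹ * φ(u)` is the unique involution of `G`. -/
theorem exists_commutator_eq_involution_of_quaternion_aut
    (G : Type*) [Group G] (e : G ≃* QuaternionGroup 2)
    (φ : MulAut G) (hφ : orderOf φ = 2) :
    ∃ u : G, orderOf (u⁻¹ * φ u) = 2 ∧
      ∀ z : G, orderOf z = 2 → z = u⁻¹ * φ u := by
  open QuaternionGroup in
  set ψ : MulAut (QuaternionGroup 2) := (e.symm.trans φ).trans e with hψdef
  have hφ2 : ∀ g : G, φ (φ g) = g := by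
    intro g
    have h := pow_orderOf_eq_one φ
    rw [hφ, sq] at h
    have : φ (φ g) = (φ * φ) g := rfl
    rw [this, h]; rfl
  have hψ2 : ∀ g, ψ (ψ g) = g := by
    intro g
    simp only [hψdef, MulEquiv.trans_apply, MulEquiv.symm_apply_apply]
    rw [hφ2]
    simp
  have hφne : φ ≠ 1 := by
    intro h; rw [h] at hφ; simp at hφ
  have h1 : q8app (ψ (a 1)) (ψ (xa 0)) (ψ (a 1)) = a 1 := by
    rw [← q8psi_eq]; exact hψ2 (a 1)
  have h2 : q8app (ψ (a 1)) (ψ (xa 0)) (ψ (xa 0)) = xa 0 := by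
    rw [← q8psi_eq]; exact hψ2 (xa 0)
  have h3 : ¬(ψ (a 1) = a 1 ∧ ψ (xa 0) = xa 0) := by
    rintro ⟨ha1, hxa0⟩
    apply hφne
    ext g
    have hg : ψ (e g) = e g := by
      rw [q8psi_eq, ha1, hxa0]
      have h := q8psi_eq 1 (e g)
      simpa using h.symm
    simp only [hψdef, MulEquiv.trans_apply, MulEquiv.symm_apply_apply] at hg
    have := congrArg e.symm hg
    simpa using this
  obtain ⟨u, hu⟩ := q8key _ _ h1 h2 h3
  rw [← q8psi_eq] at hu
  have key : (e.symm u)⁻¹ * φ (e.symm u) = e.symm (a 2) := by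
    apply e.injective
    simp only [map_mul, map_inv, MulEquiv.apply_symm_apply]
    rw [← hu]; rfl
  refine ⟨e.symm u, ?_, ?_⟩
  · rw [key]
    apply orderOf_eq_prime
    · rw [← map_pow]
      have h : (a 2 : QuaternionGroup 2) ^ 2 = 1 := by decide
      rw [h, map_one]
    · simp only [ne_eq, EmbeddingLike.map_eq_one_iff]
      decide
  · intro z hz
    have hz1 : e z ≠ 1 := by
      simp only [ne_eq, EmbeddingLike.map_eq_one_iff]
      intro h; rw [h] at hz; simp at hz
    have hzz : z * z = 1 := by
      have h := pow_orderOf_eq_one z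
      rwa [hz, sq] at h
    have hz2 : e z * e z = 1 := by rw [← map_mul, hzz, map_one]
    have h := q8uniq (e z) hz1 hz2
    rw [key, ← h]
    simp
end

section
/- Let G = K × L be a finite group in which every commutator has prime power order (a CPPO-group), where both K and L are nonabelian. Then there exists a prime p such that the commutator subgroup G' is a p-group. -/
open Subgroup

lemma commutator_isPGroup_of_commutators_pelements
    {G : Type*} [Group G] [Finite G] {p : ℕ} (hp : p.Prime)
    (h : ∀ x y : G, ∃ k : ℕ, orderOf (x⁻¹ * y⁻¹ * x * y) = p ^ k) :
    IsPGroup p (commutator G) := by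
  haveI : Fact p.Prime := ⟨hp⟩
  have key : ∀ q : ℕ, q.Prime → q ≠ p → ∀ g : G, g ∈ commutator G → orderOf g ≠ q := by
    intro q hq hqp g hg hord
    haveI : Fact q.Prime := ⟨hq⟩
    have hzp : IsPGroup q (zpowers g) :=
      IsPGroup.of_card (n := 1) (by rw [Nat.card_zpowers, hord, pow_one])
    obtain ⟨Q, hQ⟩ := hzp.exists_le_sylow
    have hgQ : g ∈ (Q : Subgroup G) := hQ (mem_zpowers g)
    -- every commutator lying in Q is trivial
    have htriv : ∀ x y : G, x⁻¹ * y⁻¹ * x * y ∈ (Q : Subgroup G) →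
        x⁻¹ * y⁻¹ * x * y = 1 := by
      intro x y hmem
      obtain ⟨k, hk⟩ := h x y
      have h1 : orderOf (x⁻¹ * y⁻¹ * x * y) ∣ Nat.card (Q : Subgroup G) := by
        rw [← Subgroup.orderOf_mk _ hmem]
        exact orderOf_dvd_natCard _
      obtain ⟨n, hn⟩ := Q.2.exists_card_eq
      rw [hk, hn] at h1
      have hk0 : k = 0 := by
        by_contra hk0
        have hpq : p ∣ q ^ n := dvd_trans (dvd_pow_self p hk0) h1
        exact hqp ((Nat.prime_dvd_prime_iff_eq hp hq).mp
          (Nat.Prime.dvd_of_dvd_pow hp hpq)).symm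
      rw [hk0, pow_zero, orderOf_eq_one_iff] at hk
      exact hk
    -- Q is abelian
    letI : CommGroup (Q : Subgroup G) :=
      { (inferInstance : Group (Q : Subgroup G)) with
        mul_comm := by
          intro a b
          have h1 := htriv (a : G) (b : G)
            (mul_mem (mul_mem (mul_mem (inv_mem a.2) (inv_mem b.2)) a.2) b.2)
          have h3 := congrArg (fun z => (b : G) * (a : G) * z) h1
          refine Subtype.ext ?_
          simpa [mul_assoc] using h3 }
    let ϕ : (Q : Subgroup G) →* (Q : Subgroup G) := MonoidHom.id _
    let τ : G →* (Q : Subgroup G) := MonoidHom.transfer ϕ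
    have hkey : ∀ (k : ℕ) (g₀ : G), g₀⁻¹ * g ^ k * g₀ ∈ (Q : Subgroup G) →
        g₀⁻¹ * g ^ k * g₀ = g ^ k := by
      intro k g₀ hk
      have hpm : (g ^ k)⁻¹ * g₀⁻¹ * (g ^ k) * g₀ ∈ (Q : Subgroup G) := by
        have he : (g ^ k)⁻¹ * g₀⁻¹ * (g ^ k) * g₀
            = (g ^ k)⁻¹ * (g₀⁻¹ * (g ^ k) * g₀) := by group
        rw [he]
        exact mul_mem (inv_mem (pow_mem hgQ k)) hk
      have h1 := htriv (g ^ k) g₀ hpm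
      have he : g₀⁻¹ * g ^ k * g₀ = (g ^ k) * ((g ^ k)⁻¹ * g₀⁻¹ * (g ^ k) * g₀) := by group
      rw [he, h1, mul_one]
    have hτ := MonoidHom.transfer_eq_pow ϕ g hkey
    -- g is in the kernel of τ since the target is abelian
    have hτ1 : τ g = 1 := by
      have hle : commutator G ≤ τ.ker := by
        rw [_root_.commutator_def, Subgroup.commutator_le]
        intro a _ b _
        rw [MonoidHom.mem_ker]
        simp only [commutatorElement_def, map_mul, map_inv]
        rw [mul_comm (τ a) (τ b)]
        group
      exact hle hg
    rw [hτ] at hτ1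
    have hpow : g ^ (Q : Subgroup G).index = 1 := by
      simpa [ϕ] using congrArg Subtype.val hτ1
    have hdvd : orderOf g ∣ (Q : Subgroup G).index := orderOf_dvd_of_pow_eq_one hpow
    rw [hord] at hdvd
    exact Q.not_dvd_index hdvd
  -- conclude: every element of commutator G has p-power order
  rw [IsPGroup.iff_orderOf]
  intro g
  have hne : orderOf (g : G) ≠ 0 := by
    have := orderOf_pos (g : G)
    omega
  have hfac : ∀ q : ℕ, q.Prime → q ∣ orderOf (g : G) → q = p := by
    intro q hq hdvd
    by_contra hqp
    have hpow : orderOf ((g : G) ^ (orderOf (g : G) / q)) = q :=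
      orderOf_pow_orderOf_div hne hdvd
    exact key q hq hqp _ (pow_mem g.2 _) hpow
  refine ⟨(orderOf (g : G)).primeFactorsList.length, ?_⟩
  rw [← Subgroup.orderOf_coe]
  exact Nat.eq_prime_pow_of_unique_prime_dvd hne fun {d} hd hdvd => hfac d hd hdvd

/-- Let `G = K × L` be a finite CPPO-group with `K` and `L` both
nonabelian. Then the commutator subgroup `G'` is a `p`-group for some prime `p`. -/
theorem commutator_is_pgroup_of_cppo_product
    (K L : Type*) [Group K] [Group L] [Finite K] [Finite L]
    (hCPPO : ∀ x y : K × L, ∃ p k : ℕ, p.Prime ∧ orderOf (x⁻¹ * y⁻¹ * x * y) = p ^ k)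
    (hK : ∃ a b : K, a * b ≠ b * a) (hL : ∃ a b : L, a * b ≠ b * a) :
    ∃ p : ℕ, p.Prime ∧ IsPGroup p (commutator (K × L)) := by
  obtain ⟨a, b, hab⟩ := hK
  obtain ⟨c, d, hcd⟩ := hL
  set u : K := a⁻¹ * b⁻¹ * a * b with hu
  set v : L := c⁻¹ * d⁻¹ * c * d with hv
  have hu1 : u ≠ 1 := by
    rw [hu]
    intro h1
    apply hab
    have := congrArg (fun z => b * a * z) h1
    simpa [mul_assoc] using this
  have hv1 : v ≠ 1 := by
    rw [hv]
    intro h1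
    apply hcd
    have := congrArg (fun z => d * c * z) h1
    simpa [mul_assoc] using this
  -- order of a general commutator in the product
  have horder : ∀ x₁ y₁ : K, ∀ x₂ y₂ : L,
      orderOf ((x₁, x₂)⁻¹ * (y₁, y₂)⁻¹ * (x₁, x₂) * (y₁, y₂) : K × L)
        = Nat.lcm (orderOf (x₁⁻¹ * y₁⁻¹ * x₁ * y₁)) (orderOf (x₂⁻¹ * y₂⁻¹ * x₂ * y₂)) := by
    intro x₁ y₁ x₂ y₂
    rw [show ((x₁, x₂)⁻¹ * (y₁, y₂)⁻¹ * (x₁, x₂) * (y₁, y₂) : K × L)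
        = (x₁⁻¹ * y₁⁻¹ * x₁ * y₁, x₂⁻¹ * y₂⁻¹ * x₂ * y₂) by rfl]
    exact Prod.orderOf_mk
  -- order of u is a positive prime power
  obtain ⟨p, k, hp, hpk⟩ := hCPPO (a, 1) (b, 1)
  rw [horder] at hpk
  have hpu : orderOf u = p ^ k := by simpa using hpk
  have hk0 : k ≠ 0 := by
    intro h0
    rw [h0, pow_zero, orderOf_eq_one_iff] at hpu
    exact hu1 hpu
  -- order of v is a positive prime power
  obtain ⟨q, m, hq, hqm⟩ := hCPPO ((1 : K), c) ((1 : K), d)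
  rw [horder] at hqm
  have hqv : orderOf v = q ^ m := by simpa using hqm
  have hm0 : m ≠ 0 := by
    intro h0
    rw [h0, pow_zero, orderOf_eq_one_iff] at hqv
    exact hv1 hqv
  -- p = q
  have hpq : p = q := by
    obtain ⟨r, s, hr, hrs⟩ := hCPPO (a, c) (b, d)
    rw [horder, ← hu, ← hv, hpu, hqv] at hrs
    have hpr : p ∣ r ^ s := hrs ▸ dvd_trans (dvd_pow_self p hk0) (Nat.dvd_lcm_left _ _)
    have hqr : q ∣ r ^ s := hrs ▸ dvd_trans (dvd_pow_self q hm0) (Nat.dvd_lcm_right _ _)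
    have h1 := (Nat.prime_dvd_prime_iff_eq hp hr).mp (hp.dvd_of_dvd_pow hpr)
    have h2 := (Nat.prime_dvd_prime_iff_eq hq hr).mp (hq.dvd_of_dvd_pow hqr)
    rw [h1, h2]
  subst hpq
  -- every commutator in K × L has p-power order
  refine ⟨p, hp, commutator_isPGroup_of_commutators_pelements hp ?_⟩
  rintro ⟨x₁, x₂⟩ ⟨y₁, y₂⟩
  -- first component has p-power order
  have h1 : ∃ i : ℕ, orderOf (x₁⁻¹ * y₁⁻¹ * x₁ * y₁) = p ^ i := by
    obtain ⟨r, s, hr, hrs⟩ := hCPPO (x₁, c) (y₁, d)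
    rw [horder, ← hv, hqv] at hrs
    have hqr : p ∣ r ^ s := hrs ▸ dvd_trans (dvd_pow_self p hm0) (Nat.dvd_lcm_right _ _)
    have h2 := (Nat.prime_dvd_prime_iff_eq hp hr).mp (hp.dvd_of_dvd_pow hqr)
    subst h2
    have : orderOf (x₁⁻¹ * y₁⁻¹ * x₁ * y₁) ∣ p ^ s :=
      hrs ▸ Nat.dvd_lcm_left _ _
    exact (Nat.dvd_prime_pow hp).mp this |>.imp fun i hi => hi.2
  have h2 : ∃ j : ℕ, orderOf (x₂⁻¹ * y₂⁻¹ * x₂ * y₂) = p ^ j := by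
    obtain ⟨r, s, hr, hrs⟩ := hCPPO (a, x₂) (b, y₂)
    rw [horder, ← hu, hpu] at hrs
    have hqr : p ∣ r ^ s := hrs ▸ dvd_trans (dvd_pow_self p hk0) (Nat.dvd_lcm_left _ _)
    have h3 := (Nat.prime_dvd_prime_iff_eq hp hr).mp (hp.dvd_of_dvd_pow hqr)
    subst h3
    have : orderOf (x₂⁻¹ * y₂⁻¹ * x₂ * y₂) ∣ p ^ s :=
      hrs ▸ Nat.dvd_lcm_right _ _
    exact (Nat.dvd_prime_pow hp).mp this |>.imp fun i hi => hi.2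
  obtain ⟨i, hi⟩ := h1
  obtain ⟨j, hj⟩ := h2
  refine ⟨max i j, ?_⟩
  rw [horder, hi, hj]
  rcases le_total i j with hij | hij
  · rw [Nat.lcm, Nat.gcd_eq_left (pow_dvd_pow p hij), max_eq_right hij,
      Nat.mul_div_cancel_left _ (pow_pos hp.pos i)]
  · rw [Nat.lcm, Nat.gcd_eq_right (pow_dvd_pow p hij), max_eq_left hij,
      Nat.mul_div_cancel _ (pow_pos hp.pos j)]
end

section
/- Let G be a nontrivial finite group in which every commutator has prime power order (a CPPO-group), and suppose the soluble radical of G is trivial. Then G is almost simple: G has a normal subgroup S that is a nonabelian simple group and satisfies C_G(S) = 1. -/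
/-!
Let `N` be a minimal normal subgroup of `G`; it is not soluble.

If subgroups `A` and `B` commute elementwise, meet trivially and `B` is nonabelian, pick
`c, d ∈ B` with `[c, d] ≠ 1`, of `p`-power order. For `x, y ∈ A` we have
`[x c, y d] = [x, y] [c, d]`, and the orders of both (commuting) factors divide the order of the
product since `A ∩ B = 1`. Hence all commutators of `A` are `p`-elements, and such a group is
soluble: for a Sylow `q`-subgroup `Q` with `q ≠ p`, each `[a, g]` with `a ∈ Q`, `g ∈ N(Q)` is a
`p`- and a `q`-element, so `N(Q) = C(Q)` and Burnside's theorem gives a normal `q`-complement.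

With `A = N`, `B = C_G(N)` this shows `C_G(N) = 1`. In the characteristically simple group `N`,
a minimal normal subgroup `T` meets each of its automorphic images `φ T ≠ T` trivially and
commutes with it. If `T` is soluble it is abelian, hence central, so `N` is abelian; otherwise
`A = φ T`, `B = T` rules out `φ T ≠ T`, so `T` is characteristic and `T = N` is simple.
-/

open Subgroup

def IsCPPOGroup (G : Type*) [Group G] : Prop :=
  ∀ x y : G, ∃ p k : ℕ, p.Prime ∧ orderOf (x⁻¹ * y⁻¹ * x * y) = p ^ k

section

variable {G : Type*} [Group G]

theorem IsCPPOGroup.subgroup (hG : IsCPPOGroup G) (H : Subgroup G) : IsCPPOGroup H :=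
  fun x y => by
    obtain ⟨p, k, hp, hpk⟩ := hG x y
    exact ⟨p, k, hp, by rw [← orderOf_coe]; exact hpk⟩

theorem commute_of_inv_mul_inv_mul_mul_eq_one {x y : G} (h : x⁻¹ * y⁻¹ * x * y = 1) :
    Commute x y := by
  rw [← Commute.inv_inv_iff, ← commutatorElement_eq_one_iff_commute, commutatorElement_def,
    inv_inv, inv_inv, h]

theorem normalizer_le_centralizer_of_orderOf_commutator {p q : ℕ} [Fact q.Prime] (hp : p.Prime)
    (hpq : p ≠ q)
    (h : ∀ x y : G, ∃ k, orderOf (x⁻¹ * y⁻¹ * x * y) = p ^ k) {Q : Subgroup G}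
    (hQ : IsPGroup q Q) : normalizer Q ≤ centralizer (Q : Set G) := by
  intro g hg
  rw [mem_centralizer_iff]
  intro a ha
  have hmem : a⁻¹ * g⁻¹ * a * g ∈ Q := by
    have := mul_mem (inv_mem ha) ((mem_normalizer_iff''.mp hg a).mp ha)
    simpa only [mul_assoc] using this
  obtain ⟨k, hk⟩ := h a g
  obtain ⟨m, hm⟩ := IsPGroup.iff_orderOf.mp hQ ⟨_, hmem⟩
  rw [orderOf_mk, hk] at hm
  have hk1 : p ^ k = 1 :=
    (Nat.coprime_pow_primes k m hp (Fact.out) hpq).eq_one_of_dvd (hm ▸ dvd_rfl)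
  rw [hk1, orderOf_eq_one_iff] at hk
  exact commute_of_inv_mul_inv_mul_mul_eq_one hk

theorem isSolvable_of_orderOf_commutator_eq_prime_pow {p : ℕ} (hp : p.Prime) {H : Type*}
    [Group H] [Finite H] (h : ∀ x y : H, ∃ k, orderOf (x⁻¹ * y⁻¹ * x * y) = p ^ k) :
    Group.IsSolvable H := by
  induction hn : Nat.card H using Nat.strong_induction_on generalizing H with
  | _ n ih =>
  by_cases hpH : IsPGroup p H
  · have := Fact.mk hp
    have := hpH.isNilpotent
    infer_instance
  obtain ⟨q, hq, hqH, hpq⟩ : ∃ q, q.Prime ∧ q ∣ Nat.card H ∧ p ≠ q := by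
    by_contra! h'
    exact hpH (IsPGroup.of_card
      (Nat.eq_prime_pow_of_unique_prime_dvd Nat.card_pos.ne' fun hq hd => (h' _ hq hd).symm))
  have := Fact.mk hq
  let Q : Sylow q H := default
  have hQ := normalizer_le_centralizer_of_orderOf_commutator hp hpq h Q.isPGroup'
  let K := (MonoidHom.transferSylow Q hQ).ker
  have hK : Nat.card K < n := by
    have hcard := (MonoidHom.ker_transferSylow_isComplement' Q hQ).card_mul_card
    have hQ1 : 1 < Nat.card Q := (one_lt_card_iff_ne_bot _).mpr (Q.ne_bot_of_dvd_card hqH)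
    rw [← hn, ← hcard]
    exact lt_mul_of_one_lt_right Nat.card_pos hQ1
  have : Group.IsSolvable K := ih _ hK (fun x y => by rw [← orderOf_coe]; exact h x y) rfl
  have := Q.isPGroup'.isNilpotent
  exact Group.isSolvable_of_ker_le_range K.subtype (MonoidHom.transferSylow Q hQ)
    (by rw [range_subtype])

theorem exists_not_commute_of_not_isSolvable (h : ¬Group.IsSolvable G) :
    ∃ a b : G, ¬Commute a b := by
  by_contra! hcomm
  exact h (Group.isSolvable_of_comm hcomm)

theorem orderOf_dvd_orderOf_mul_of_disjoint {A B : Subgroup G} (hAB : Disjoint A B) {a b : G}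
    (ha : a ∈ A) (hb : b ∈ B) (hab : Commute a b) : orderOf a ∣ orderOf (a * b) := by
  apply orderOf_dvd_of_pow_eq_one
  have hpow : a ^ orderOf (a * b) * b ^ orderOf (a * b) = 1 := by
    rw [← hab.mul_pow, pow_orderOf_eq_one]
  refine disjoint_def.mp hAB (pow_mem ha _) ?_
  rw [eq_inv_of_mul_eq_one_left hpow]
  exact inv_mem (pow_mem hb _)

theorem IsCPPOGroup.isSolvable_of_le_centralizer [Finite G] (hG : IsCPPOGroup G)
    {A B : Subgroup G} (hAB : A ≤ centralizer B) (hdisj : Disjoint A B)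
    (hB : ¬Group.IsSolvable B) : Group.IsSolvable A := by
  obtain ⟨c, d, hcd⟩ := exists_not_commute_of_not_isSolvable hB
  set v : G := (c : G)⁻¹ * (d : G)⁻¹ * c * d
  have hvB : v ∈ B := (c⁻¹ * d⁻¹ * c * d).2
  obtain ⟨p, j, hp, hvj⟩ := hG c d
  have hj : j ≠ 0 := by
    rintro rfl
    rw [pow_zero, orderOf_eq_one_iff] at hvj
    exact hcd (Subtype.ext (commute_of_inv_mul_inv_mul_mul_eq_one hvj))
  refine isSolvable_of_orderOf_commutator_eq_prime_pow hp fun x y => ?_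
  set u : G := (x : G)⁻¹ * (y : G)⁻¹ * x * y
  have huA : u ∈ A := (x⁻¹ * y⁻¹ * x * y).2
  have huv : Commute u v := ((mem_centralizer_iff.mp (hAB huA)) v hvB).symm
  have hcomm : ∀ (a : A) (b : B), Commute (A.subtype a) (B.subtype b) :=
    fun a b => ((mem_centralizer_iff.mp (hAB a.2)) b b.2).symm
  -- `(a, b) ↦ a * b` is a homomorphism `A × B →* G` because `A` and `B` commute
  let φ : A × B →* G := MonoidHom.noncommCoprod A.subtype B.subtype hcomm
  have key : ((x : G) * c)⁻¹ * ((y : G) * d)⁻¹ * (x * c) * (y * d) = u * v := by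
    change (φ (x, c))⁻¹ * (φ (y, d))⁻¹ * φ (x, c) * φ (y, d) = u * v
    rw [← map_inv, ← map_inv, ← map_mul, ← map_mul, ← map_mul]
    rfl
  obtain ⟨r, t, hr, hrt⟩ := hG (x * c) (y * d)
  rw [key] at hrt
  have hvr : p ^ j ∣ r ^ t := by
    rw [← hvj, ← hrt, huv.eq]
    exact orderOf_dvd_orderOf_mul_of_disjoint hdisj.symm hvB huA huv.symm
  have hpr : p = r := (Nat.prime_dvd_prime_iff_eq hp hr).mp
    (hp.dvd_of_dvd_pow ((dvd_pow_self p hj).trans hvr))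
  subst hpr
  obtain ⟨i, -, hi⟩ := (Nat.dvd_prime_pow hp).mp
    (hrt ▸ orderOf_dvd_orderOf_mul_of_disjoint hdisj huA hvB huv)
  exact ⟨i, by rw [← orderOf_coe]; exact hi⟩

namespace Subgroup

theorem commutator_lt_self (H : Subgroup G) [Group.IsSolvable H] (hH : H ≠ ⊥) :
    ⁅H, H⁆ < H := by
  rw [← nontrivial_iff_ne_bot] at hH
  rw [← H.range_subtype, MonoidHom.range_eq_map, ← map_commutator, map_subtype_lt_map_subtype]
  exact Group.IsSolvable.commutator_lt_top_of_nontrivial H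

theorem characteristic_iSup_map_mulAut (T : Subgroup G) :
    (⨆ φ : MulAut G, T.map φ.toMonoidHom).Characteristic := by
  refine characteristic_iff_map_le.mpr fun ψ => ?_
  rw [map_iSup]
  refine iSup_le fun φ => ?_
  rw [map_map]
  exact le_iSup (fun φ : MulAut G => T.map φ.toMonoidHom) (ψ * φ)

def IsMinimalNormal (N : Subgroup G) : Prop :=
  Minimal (fun H : Subgroup G => H.Normal ∧ H ≠ ⊥) N

variable {M N : Subgroup G}

theorem IsMinimalNormal.disjoint_of_ne (hM : M.IsMinimalNormal) (hN : N.IsMinimalNormal)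
    (hne : M ≠ N) : Disjoint M N := by
  have := hM.prop.1
  have := hN.prop.1
  by_contra h
  have hMN : (M ⊓ N).Normal ∧ M ⊓ N ≠ ⊥ := ⟨inferInstance, disjoint_iff.not.mp h⟩
  exact hne ((hM.eq_of_le hMN inf_le_left).symm.trans (hN.eq_of_le hMN inf_le_right))

theorem IsMinimalNormal.map_equiv {G' : Type*} [Group G'] (hN : N.IsMinimalNormal)
    (e : G ≃* G') : (N.map e.toMonoidHom).IsMinimalNormal := by
  refine ⟨⟨hN.prop.1.map _ e.surjective, (map_eq_bot_iff_of_injective N e.injective).not.mpr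
    hN.prop.2⟩, fun H hH hHN => ?_⟩
  have hH' : (H.map e.symm.toMonoidHom).Normal ∧ H.map e.symm.toMonoidHom ≠ ⊥ :=
    ⟨hH.1.map _ e.symm.surjective, (map_eq_bot_iff_of_injective H e.symm.injective).not.mpr hH.2⟩
  have hNH : N ≤ H.map e.symm.toMonoidHom :=
    hN.le_of_le hH' (e.mapSubgroup.symm_apply_le.mpr hHN)
  exact e.mapSubgroup.le_symm_apply.mp hNH

theorem IsMinimalNormal.commutator_eq_bot (hN : N.IsMinimalNormal) [Group.IsSolvable N] :
    ⁅N, N⁆ = ⊥ := by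
  have := hN.prop.1
  by_contra h
  exact (N.commutator_lt_self hN.prop.2).ne
    (hN.eq_of_le ⟨inferInstance, h⟩ (commutator_le_left N N))

variable (G) in
theorem exists_isMinimalNormal [Finite G] [Nontrivial G] : ∃ N : Subgroup G, N.IsMinimalNormal :=
  exists_minimal_of_wellFoundedLT _ ⟨⊤, inferInstance, top_ne_bot⟩

theorem IsMinimalNormal.characteristic_eq_bot_or_eq_top (hN : N.IsMinimalNormal)
    (H : Subgroup N) [H.Characteristic] : H = ⊥ ∨ H = ⊤ := by
  have := hN.prop.1
  refine or_iff_not_imp_left.mpr fun hH => ?_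
  have hmap : (H.map N.subtype).Normal ∧ H.map N.subtype ≠ ⊥ :=
    ⟨inferInstance, (map_eq_bot_iff_of_injective H N.subtype_injective).not.mpr hH⟩
  rw [← top_le_iff, ← map_subtype_le_map_subtype, ← MonoidHom.range_eq_map, range_subtype]
  exact hN.le_of_le hmap (map_subtype_le H)

end Subgroup

theorem IsCPPOGroup.isSimpleGroup [Finite G] (hG : IsCPPOGroup G) (hs : ¬Group.IsSolvable G)
    (hchar : ∀ H : Subgroup G, H.Characteristic → H = ⊥ ∨ H = ⊤) : IsSimpleGroup G := by
  have : Nontrivial G := not_subsingleton_iff_nontrivial.mp fun _ => hs inferInstance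
  obtain ⟨T, hT⟩ := exists_isMinimalNormal G
  have := hT.prop.1
  have hconj : ∀ φ : MulAut G, T.map φ.toMonoidHom ≠ T →
      T.map φ.toMonoidHom ≤ centralizer T := fun φ hne x hx =>
    mem_centralizer_iff.mpr fun y hy => (commute_of_normal_of_disjoint _ _ hT.prop.1
      (hT.map_equiv φ).prop.1 (hT.disjoint_of_ne (hT.map_equiv φ) hne.symm) y x hy hx)
  by_cases hTs : Group.IsSolvable T
  · have hTab : T ≤ centralizer T := commutator_eq_bot_iff_le_centralizer.mp hT.commutator_eq_bot
    set K := ⨆ φ : MulAut G, T.map φ.toMonoidHom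
    have hKT : K ≤ centralizer T := iSup_le fun φ => by
      by_cases hφ : T.map φ.toMonoidHom = T
      · exact hφ.le.trans hTab
      · exact hconj φ hφ
    have hTK : T ≤ K := (map_id T).ge.trans (le_iSup (fun φ : MulAut G => T.map φ.toMonoidHom) 1)
    have hK : K = ⊤ := (hchar K T.characteristic_iSup_map_mulAut).resolve_left
      (ne_bot_of_le_ne_bot hT.prop.2 hTK)
    have hTZ : T ≤ center G := by
      rw [← centralizer_univ, ← coe_top, le_centralizer_iff, ← hK]
      exact hKT
    have hZ : center G = ⊤ := (hchar _ inferInstance).resolve_left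
      (ne_bot_of_le_ne_bot hT.prop.2 hTZ)
    exact absurd (Group.isSolvable_of_comm fun a b => mem_center_iff.mp (hZ ▸ mem_top b) a) hs
  · have hTchar : T.Characteristic := characteristic_iff_map_eq.mpr fun φ => by
      by_contra hne
      have := hG.isSolvable_of_le_centralizer (hconj φ hne)
        ((hT.map_equiv φ).disjoint_of_ne hT hne) hTs
      exact hTs (Group.isSolvable_of_surjective
        (f := (T.equivMapOfInjective φ.toMonoidHom φ.injective).symm.toMonoidHom)
        (MulEquiv.surjective _))
    have hTtop : T = ⊤ := (hchar T hTchar).resolve_left hT.prop.2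
    subst hTtop
    exact ⟨fun H hH => or_iff_not_imp_left.mpr fun hbot =>
      top_le_iff.mp (hT.le_of_le ⟨hH, hbot⟩ le_top)⟩

theorem IsCPPOGroup.centralizer_eq_bot [Finite G] (hG : IsCPPOGroup G)
    (hrad : ∀ N : Subgroup G, N.Normal → Group.IsSolvable N → N = ⊥) {N : Subgroup G} [N.Normal]
    (hN : ¬Group.IsSolvable N) : centralizer (N : Set G) = ⊥ := by
  by_contra hC
  have hdisj : Disjoint N (centralizer N) := by
    rw [disjoint_iff]
    exact hrad _ inferInstance (Group.isSolvable_of_comm fun a b =>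
      Subtype.ext (mem_centralizer_iff.mp b.2.2 a a.2.1))
  exact hN (hG.isSolvable_of_le_centralizer (le_centralizer_iff.mp le_rfl) hdisj
    fun h => hC (hrad _ inferInstance h))

end

/-- Let `G` be a nontrivial finite CPPO-group whose soluble radical is
trivial. Then `G` is almost simple: it has a nonabelian simple normal subgroup `S` with
trivial centralizer. -/
theorem almost_simple_of_cppo_trivial_radical
    (G : Type*) [Group G] [Finite G] [Nontrivial G]
    (hCPPO : ∀ x y : G, ∃ p k : ℕ, p.Prime ∧ orderOf (x⁻¹ * y⁻¹ * x * y) = p ^ k)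
    (hrad : ∀ N : Subgroup G, N.Normal → IsSolvable N → N = ⊥) :
    ∃ S : Subgroup G, S.Normal ∧ IsSimpleGroup S ∧ (∃ a b : S, a * b ≠ b * a) ∧
      Subgroup.centralizer (S : Set G) = ⊥ := by
  obtain ⟨N, hN⟩ := exists_isMinimalNormal G
  have hNnormal := hN.prop.1
  have hNs : ¬Group.IsSolvable N := fun h => hN.prop.2 (hrad N hNnormal h)
  obtain ⟨a, b, hab⟩ := exists_not_commute_of_not_isSolvable hNs
  exact ⟨N, hNnormal, (IsCPPOGroup.subgroup hCPPO N).isSimpleGroup hNs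
    (fun H _ => hN.characteristic_eq_bot_or_eq_top H), ⟨a, b, hab⟩,
    IsCPPOGroup.centralizer_eq_bot hCPPO hrad hNs⟩
end

section
/- Let G be a finite group containing a normal subgroup N such that G/N is a nonabelian simple group in which every element has prime power order. Let q be a prime dividing |G| but not dividing |N|. Then there exists a nontrivial elementary abelian q-subgroup Q of G and an element a ∈ G, whose order is a positive power of some prime p ≠ q, such that a normalizes Q and Q = [Q,a], where [Q,a] is the subgroup generated by all commutators [u,a] with u ∈ Q. -/
/-!
Put `S = G/N`. If every nontrivial `q`-subgroup of `S` had a `q`-group as normalizer, a Sylow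
`q`-subgroup `P` of `S` would be malnormal; the transfer `S → P^ab` then restricts to the
abelianization map on `P`, which is nontrivial since `P` is solvable, and this contradicts `S` being
simple and nonabelian. So some nontrivial `q`-subgroup `R` is normalized by an element `b` which,
`S` being EPPO, has order a power of a prime `p ≠ q`; then `b` normalizes `Ω₁(Z(R))`.

By the Frattini argument, a Sylow `q`-subgroup `Q` of the preimage of `Ω₁(Z(R))` in `G` is
normalized by a lift of an element of the coset `b Ω₁(Z(R))`, and the `p`-part `a` of that lift
still maps to a nontrivial `p`-element of `S`. As `q ∤ |N|`, `Q` embeds into `Ω₁(Z(R))` and is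
elementary abelian. In the EPPO group `S` no element of order `q` commutes with a nontrivial
`p`-element, so `a` acts on `Q` without nontrivial fixed points, and `u ↦ u⁻¹ a⁻¹ u a` is a
bijection of `Q`.
-/

open Subgroup

section General

variable {G : Type*} [Group G]

theorem not_commute_of_orderOf_eq_prime_pow
    (hEPPO : ∀ g : G, ∃ p k : ℕ, p.Prime ∧ orderOf g = p ^ k)
    {x y : G} {p q i j : ℕ} (hp : p.Prime) (hq : q.Prime) (hpq : p ≠ q) (hi : 0 < i) (hj : 0 < j)
    (hx : orderOf x = p ^ i) (hy : orderOf y = q ^ j) : ¬ Commute x y := by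
  intro hxy
  have hcop : (orderOf x).Coprime (orderOf y) := by
    rw [hx, hy]
    exact Nat.Coprime.pow _ _ ((Nat.coprime_primes hp hq).2 hpq)
  obtain ⟨r, k, hr, hrk⟩ := hEPPO (x * y)
  rw [hxy.orderOf_mul_eq_mul_orderOf_of_coprime hcop, hx, hy] at hrk
  have hpr : p ∣ r ^ k := hrk ▸ (dvd_pow_self p hi.ne').mul_right _
  have hqr : q ∣ r ^ k := hrk ▸ (dvd_pow_self q hj.ne').mul_left _
  exact hpq <| ((Nat.prime_dvd_prime_iff_eq hp hr).1 (hp.dvd_of_dvd_pow hpr)).trans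
    ((Nat.prime_dvd_prime_iff_eq hq hr).1 (hq.dvd_of_dvd_pow hqr)).symm

theorem orderOf_eq_prime_pow_of_dvd
    (hEPPO : ∀ g : G, ∃ p k : ℕ, p.Prime ∧ orderOf g = p ^ k) {y : G} {p k : ℕ} (hp : p.Prime)
    (hk : 0 < k) (h : p ^ k ∣ orderOf y) : ∃ j, 0 < j ∧ orderOf y = p ^ j := by
  obtain ⟨r, j, hr, hj⟩ := hEPPO y
  obtain rfl : p = r := (Nat.prime_dvd_prime_iff_eq hp hr).mp
    (hp.dvd_of_dvd_pow ((dvd_pow_self p hk.ne').trans (hj ▸ h)))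
  refine ⟨j, Nat.pos_of_ne_zero fun hj0 => ?_, hj⟩
  rw [hj, hj0, pow_zero, Nat.dvd_one] at h
  exact (Nat.one_lt_pow hk.ne' hp.one_lt).ne' h

theorem closure_commutators_eq_self_of_fixedPointFree {Q : Subgroup G} [Finite Q] {a : G}
    (ha : a ∈ normalizer (Q : Set G)) (hfree : ∀ u ∈ Q, u * a = a * u → u = 1) :
    closure {x : G | ∃ u ∈ Q, x = u⁻¹ * a⁻¹ * u * a} = Q := by
  have hconj : ∀ u ∈ Q, a⁻¹ * u * a ∈ Q := fun u hu => by
    simpa using (mem_normalizer_iff.mp (inv_mem ha) u).mp hu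
  let f : Q → Q := fun u => ⟨(u : G)⁻¹ * a⁻¹ * u * a, by
    simpa only [mul_assoc] using Q.mul_mem (Q.inv_mem u.2) (hconj u u.2)⟩
  -- `f u₁ = f u₂` says that `u₂ * u₁⁻¹` commutes with `a`
  have hf : Function.Injective f := fun u₁ u₂ h => by
    have h' : (u₁ : G)⁻¹ * a⁻¹ * u₁ * a = (u₂ : G)⁻¹ * a⁻¹ * u₂ * a := congrArg Subtype.val h
    have hcomm : (u₂ : G) * (u₁ : G)⁻¹ * a = a * ((u₂ : G) * (u₁ : G)⁻¹) := by
      calc (u₂ : G) * (u₁ : G)⁻¹ * a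
          = a * ((u₂ : G) * ((u₂ : G)⁻¹ * a⁻¹ * u₂ * a) * ((u₁ : G)⁻¹ * a⁻¹ * u₁ * a)⁻¹
            * (u₁ : G)⁻¹) := by group
        _ = a * ((u₂ : G) * (u₁ : G)⁻¹) := by rw [← h']; group
    exact Subtype.ext (mul_inv_eq_one.mp (hfree _ (Q.mul_mem u₂.2 (Q.inv_mem u₁.2)) hcomm)).symm
  refine le_antisymm (closure_le _ |>.mpr ?_) fun v hv => subset_closure ?_
  · rintro _ ⟨u, hu, rfl⟩
    exact (f ⟨u, hu⟩).2
  · obtain ⟨u, hu⟩ := Finite.surjective_of_injective hf ⟨v, hv⟩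
    exact ⟨u, u.2, (congrArg Subtype.val hu).symm⟩

theorem inv_pow_mul_mul_pow_mem_of_mem_normalizer {Q : Subgroup G} {b w : G}
    (hb : b ∈ normalizer (Q : Set G)) (hw : w ∈ Q) (n : ℕ) : (b ^ n)⁻¹ * (b * w) ^ n ∈ Q := by
  induction n with
  | zero => simp
  | succ n ih =>
    have h := (mem_normalizer_iff.mp (inv_mem hb) _).mp ih
    rw [inv_inv] at h
    have key : (b ^ (n + 1))⁻¹ * (b * w) ^ (n + 1) = b⁻¹ * ((b ^ n)⁻¹ * (b * w) ^ n) * b * w := by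
      simp only [pow_succ, mul_inv_rev, mul_assoc]
    rw [key]
    exact Q.mul_mem h hw

theorem orderOf_dvd_orderOf_mul_of_mem_normalizer {Q : Subgroup G} {q : ℕ}
    (hQ : ∀ x ∈ Q, x ^ q = 1) {b w : G} (hb : b ∈ normalizer (Q : Set G)) (hw : w ∈ Q)
    (hcop : (orderOf b).Coprime q) : orderOf b ∣ orderOf (b * w) := by
  have hmem := inv_pow_mul_mul_pow_mem_of_mem_normalizer hb hw (orderOf (b * w))
  rw [pow_orderOf_eq_one, mul_one, inv_mem_iff] at hmem
  have h := hQ _ hmem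
  rw [← pow_mul] at h
  exact hcop.dvd_of_dvd_mul_right (orderOf_dvd_of_pow_eq_one h)

theorem exists_orderOf_pow_eq_ordProj (x : G) (hx : 0 < orderOf x) {p : ℕ} (hp : p.Prime) :
    ∃ m : ℕ, p.Coprime m ∧ orderOf (x ^ m) = p ^ (orderOf x).factorization p := by
  refine ⟨orderOf x / p ^ (orderOf x).factorization p, Nat.coprime_ordCompl hp hx.ne', ?_⟩
  rw [orderOf_pow_of_dvd (Nat.div_pos (Nat.ordProj_le p hx.ne') (pow_pos hp.pos _)).ne'
    (Nat.div_dvd_of_dvd (Nat.ordProj_dvd _ _)), Nat.div_div_self (Nat.ordProj_dvd _ _) hx.ne']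

end General

namespace Subgroup

variable {G : Type*} [Group G]

structure IsElementaryAbelian (q : ℕ) (Q : Subgroup G) : Prop where
  mul_comm : ∀ x ∈ Q, ∀ y ∈ Q, x * y = y * x
  pow_eq_one : ∀ x ∈ Q, x ^ q = 1

theorem IsElementaryAbelian.of_comap {H : Type*} [Group H] {f : G →* H} {q : ℕ}
    {Q : Subgroup G} {Q' : Subgroup H} (hQ' : Q'.IsElementaryAbelian q) (hle : Q ≤ Q'.comap f)
    (hker : Disjoint Q f.ker) : Q.IsElementaryAbelian q := by
  have eq_one : ∀ u ∈ Q, f u = 1 → u = 1 := fun u hu hfu =>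
    (disjoint_def.mp hker) hu (f.mem_ker.mpr hfu)
  refine ⟨fun x hx y hy => ?_, fun x hx => ?_⟩
  · have h := eq_one _ (Q.mul_mem (Q.mul_mem hx hy) (Q.inv_mem (Q.mul_mem hy hx)))
      (by simp [hQ'.mul_comm _ (hle hx) _ (hle hy)])
    exact mul_inv_eq_one.mp h
  · exact eq_one _ (Q.pow_mem hx q) (by rw [map_pow, hQ'.pow_eq_one _ (hle hx)])

/-- `Ω₁(Z(R))`, for `R` a `q`-group. -/
def omegaOneCenter (q : ℕ) (R : Subgroup G) : Subgroup G where
  carrier := {u | u ∈ centralizer (R : Set G) ⊓ R ∧ u ^ q = 1}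
  one_mem' := ⟨one_mem _, one_pow q⟩
  mul_mem' := by
    rintro x y ⟨hx, hxq⟩ ⟨hy, hyq⟩
    have hxy : Commute x y := mem_centralizer_iff.mp (mem_inf.mp hy).1 x (mem_inf.mp hx).2
    exact ⟨mul_mem hx hy, by rw [hxy.mul_pow, hxq, hyq, one_mul]⟩
  inv_mem' := by
    rintro x ⟨hx, hxq⟩
    exact ⟨inv_mem hx, by rw [inv_pow, hxq, inv_one]⟩

variable {q : ℕ} {R : Subgroup G}

theorem mem_omegaOneCenter {u : G} :
    u ∈ R.omegaOneCenter q ↔ u ∈ centralizer (R : Set G) ∧ u ∈ R ∧ u ^ q = 1 := by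
  simp [omegaOneCenter, and_assoc]

theorem isElementaryAbelian_omegaOneCenter : (R.omegaOneCenter q).IsElementaryAbelian q where
  mul_comm _ hx y hy :=
    (mem_centralizer_iff.mp (mem_omegaOneCenter.mp hx).1 y (mem_omegaOneCenter.mp hy).2.1).symm
  pow_eq_one _ hx := (mem_omegaOneCenter.mp hx).2.2

theorem conj_mem_omegaOneCenter {g u : G} (hg : g ∈ normalizer (R : Set G))
    (hu : u ∈ R.omegaOneCenter q) : g * u * g⁻¹ ∈ R.omegaOneCenter q := by
  obtain ⟨huC, huR, huq⟩ := mem_omegaOneCenter.mp hu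
  refine mem_omegaOneCenter.mpr ⟨mem_centralizer_iff.mpr fun r hr => ?_,
    (mem_normalizer_iff.mp hg u).mp huR, by rw [conj_pow, huq, mul_one, mul_inv_cancel]⟩
  have hr' : g⁻¹ * r * g ∈ R := (mem_normalizer_iff''.mp hg r).mp hr
  have hcomm := mem_centralizer_iff.mp huC _ hr'
  calc r * (g * u * g⁻¹) = g * ((g⁻¹ * r * g) * u) * g⁻¹ := by group
    _ = g * u * g⁻¹ * r := by rw [hcomm]; group

theorem normalizer_le_normalizer_omegaOneCenter :
    normalizer (R : Set G) ≤ normalizer (R.omegaOneCenter q : Set G) := fun g hg =>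
  mem_normalizer_iff.mpr fun u => ⟨conj_mem_omegaOneCenter hg, fun hu => by
    simpa [mul_assoc] using conj_mem_omegaOneCenter (inv_mem hg) hu⟩

theorem omegaOneCenter_ne_bot [Finite G] [Fact q.Prime] (hR : IsPGroup q R) (hR' : R ≠ ⊥) :
    R.omegaOneCenter q ≠ ⊥ := by
  have : Nontrivial R := (nontrivial_iff_ne_bot R).mpr hR'
  have : Nontrivial (center R) := hR.center_nontrivial
  obtain ⟨n, hn, hcard⟩ := (hR.to_subgroup (center R)).nontrivial_iff_card.mp inferInstance
  obtain ⟨z, hz⟩ := exists_prime_orderOf_dvd_card' q (hcard ▸ dvd_pow_self q hn.ne')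
  have hzq : orderOf ((z : R) : G) = q := by simpa only [Subgroup.orderOf_coe] using hz
  refine ne_bot_iff_exists_ne_one.mpr ⟨⟨(z : R), mem_omegaOneCenter.mpr ⟨?_, (z : R).2, ?_⟩⟩, ?_⟩
  · exact mem_centralizer_iff.mpr fun r hr => congrArg Subtype.val (mem_center_iff.mp z.2 ⟨r, hr⟩)
  · rw [← hzq]; exact pow_orderOf_eq_one _
  · intro h
    rw [show ((z : R) : G) = 1 from congrArg Subtype.val h, orderOf_one] at hzq
    exact (Fact.out : q.Prime).one_lt.ne hzq

def IsMalnormal (H : Subgroup G) : Prop :=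
  ∀ x ∈ H, x ≠ 1 → ∀ g : G, g⁻¹ * x * g ∈ H → g ∈ H

-- Only the orbit of the trivial coset contributes: on any other orbit, malnormality forces the
-- corresponding power of `u` to be trivial.
open MulAction in
theorem IsMalnormal.transfer_apply_of_mem {H : Subgroup G} [H.FiniteIndex]
    (hH : H.IsMalnormal) {u : G} (hu : u ∈ H) :
    (Abelianization.of (G := H)).transfer u = Abelianization.of ⟨u, hu⟩ := by
  classical
  let := H.fintypeQuotientOfFiniteIndex
  have mk_eq_one : ∀ g : G, (g : G ⧸ H) = ((1 : G) : G ⧸ H) ↔ g ∈ H := fun g => by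
    simp [QuotientGroup.eq]
  let c₀ : Quotient (orbitRel (zpowers u) (G ⧸ H)) := Quotient.mk'' ((1 : G) : G ⧸ H)
  have hc₀ : c₀.out = ((1 : G) : G ⧸ H) := by
    obtain ⟨⟨z, hz⟩, hz'⟩ := orbitRel_apply.mp (Quotient.mk_out (s := orbitRel (zpowers u) (G ⧸ H))
      ((1 : G) : G ⧸ H))
    rw [← hz']
    exact (mk_eq_one _).mpr (by simpa using zpowers_le.mpr hu hz)
  rw [MonoidHom.transfer_eq_prod_quotient_orbitRel_zpowers_quot, Finset.prod_eq_single c₀]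
  · have hperiod : Function.minimalPeriod (u • ·) c₀.out = 1 := by
      rw [Function.minimalPeriod_eq_one_iff_isFixedPt, hc₀]
      exact (mk_eq_one _).mpr (by simpa using hu)
    have hr : c₀.out.out ∈ H := (mk_eq_one _).mp (by rw [QuotientGroup.out_eq', hc₀])
    have hconj : (⟨_, QuotientGroup.out_conj_pow_minimalPeriod_mem H u c₀.out⟩ : H) =
        (⟨_, hr⟩ : H)⁻¹ * ⟨u, hu⟩ * ⟨_, hr⟩ := Subtype.ext (by simp [hperiod])
    rw [hconj, map_mul, map_mul, mul_comm, ← mul_assoc, map_inv, mul_inv_cancel, one_mul]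
  · intro c _ hc
    by_cases hpow : u ^ Function.minimalPeriod (u • ·) c.out = 1
    · simp only [hpow, mul_one, inv_mul_cancel]
      exact map_one _
    · refine absurd ?_ hc
      have hr : c.out.out ∈ H := hH _ (pow_mem hu _) hpow _
        (QuotientGroup.out_conj_pow_minimalPeriod_mem H u c.out)
      rw [← Quotient.out_eq' c, ← QuotientGroup.out_eq' c.out, (mk_eq_one _).mpr hr]
  · exact fun h => absurd (Finset.mem_univ c₀) h

theorem IsMalnormal.eq_bot [Finite G] [IsSimpleGroup G]
    (hG : ∃ a b : G, a * b ≠ b * a) {H : Subgroup G} (hH : H.IsMalnormal) [Group.IsSolvable H] :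
    H = ⊥ := by
  by_contra hne
  have : Nontrivial H := (nontrivial_iff_ne_bot H).mpr hne
  obtain ⟨v, -, hv⟩ := SetLike.exists_of_lt (Group.IsSolvable.commutator_lt_top_of_nontrivial H)
  have hψv := hH.transfer_apply_of_mem v.2
  rcases (Abelianization.of (G := H)).transfer.normal_ker.eq_bot_or_eq_top with hker | hker
  · obtain ⟨a, b, hab⟩ := hG
    exact hab <| (MonoidHom.ker_eq_bot_iff _).mp hker (by rw [map_mul, map_mul, mul_comm])
  · have hv1 : (Abelianization.of (G := H)).transfer v = 1 := by
      rw [← MonoidHom.mem_ker, hker]; exact mem_top _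
    rw [hψv, ← MonoidHom.mem_ker, Abelianization.ker_of] at hv1
    exact hv hv1

end Subgroup

section LocalSubgroups

variable {G : Type*} [Group G] [Finite G] {q : ℕ} [Fact q.Prime]

theorem IsPGroup.lt_inf_normalizer {P D : Subgroup G} (hP : IsPGroup q P) (hD : D < P) :
    D < P ⊓ normalizer (D : Set G) := by
  have : Group.IsNilpotent P := hP.isNilpotent
  have h := Group.normalizerCondition_of_isNilpotent (D.subgroupOf P)
    (lt_top_iff_ne_top.mpr fun h => hD.not_ge (subgroupOf_eq_top.mp h))
  rw [← subgroupOf_normalizer_eq hD.le, ← map_subtype_lt_map_subtype, subgroupOf_map_subtype,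
    subgroupOf_map_subtype, inf_of_le_left hD.le] at h
  rwa [inf_comm]

variable (hloc : ∀ R : Subgroup G, R ≠ ⊥ → IsPGroup q R → IsPGroup q (normalizer (R : Set G)))
include hloc

theorem Sylow.eq_of_le_of_le {D : Subgroup G} (hD : D ≠ ⊥) (hDq : IsPGroup q D)
    {P₁ P₂ : Sylow q G} (h₁ : D ≤ P₁) (h₂ : D ≤ P₂) : P₁ = P₂ := by
  -- Downward induction on `D`: for a Sylow subgroup `P ⊋ D`, the group `P ⊓ N(D)` is strictly
  -- larger than `D` and lies in any Sylow subgroup `P₃` containing the `q`-group `N(D)`.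
  induction D using WellFoundedGT.induction generalizing P₁ P₂ with
  | _ D ih =>
  obtain ⟨P₃, hP₃⟩ := (hloc D hD hDq).exists_le_sylow
  suffices key : ∀ P : Sylow q G, D ≤ P → P = P₃ from (key P₁ h₁).trans (key P₂ h₂).symm
  intro P hP
  rcases hP.lt_or_eq with hlt | heq
  · have hE := P.2.lt_inf_normalizer hlt
    exact ih _ hE (ne_bot_of_gt hE) (P.2.to_le inf_le_left) inf_le_left (inf_le_right.trans hP₃)
  · exact Sylow.ext (P.3 P₃.2 (heq ▸ le_normalizer.trans hP₃)).symm

theorem Sylow.isMalnormal (P : Sylow q G) : (P : Subgroup G).IsMalnormal := by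
  intro x hx hx1 g hg
  have hP : (P : Subgroup G) ≠ ⊥ := ne_bot_iff_exists_ne_one.mpr ⟨⟨x, hx⟩, by simpa using hx1⟩
  have hxg : zpowers x ≤ ↑(g • P) := by
    rw [Sylow.coe_subgroup_smul, zpowers_le, mem_pointwise_smul_iff_inv_smul_mem]
    simpa [MulAut.smul_def] using hg
  have hPg := Sylow.eq_of_le_of_le hloc (by simpa using hx1) (P.2.to_le (zpowers_le.mpr hx))
    (zpowers_le.mpr hx) hxg
  rw [← P.3 (hloc P hP P.2) le_normalizer]
  exact Sylow.smul_eq_iff_mem_normalizer.mp hPg.symm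

end LocalSubgroups

theorem exists_isPGroup_not_isPGroup_normalizer {G : Type*} [Group G] [Finite G]
    [IsSimpleGroup G] (hG : ∃ a b : G, a * b ≠ b * a) {q : ℕ} [Fact q.Prime]
    (hqG : q ∣ Nat.card G) :
    ∃ R : Subgroup G, R ≠ ⊥ ∧ IsPGroup q R ∧ ¬ IsPGroup q (normalizer (R : Set G)) := by
  by_contra! hloc
  obtain ⟨P⟩ : Nonempty (Sylow q G) := inferInstance
  have : Group.IsNilpotent P := P.2.isNilpotent
  exact P.ne_bot_of_dvd_card hqG ((P.isMalnormal hloc).eq_bot hG)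

theorem exists_isElementaryAbelian_normalized_by_prime_pow {G : Type*} [Group G] [Finite G]
    [IsSimpleGroup G] (hG : ∃ a b : G, a * b ≠ b * a)
    (hEPPO : ∀ g : G, ∃ p k : ℕ, p.Prime ∧ orderOf g = p ^ k) {q : ℕ} [Fact q.Prime]
    (hqG : q ∣ Nat.card G) :
    ∃ (Q : Subgroup G) (b : G) (p k : ℕ), Q ≠ ⊥ ∧ Q.IsElementaryAbelian q ∧
      b ∈ normalizer (Q : Set G) ∧ p.Prime ∧ p ≠ q ∧ 0 < k ∧ orderOf b = p ^ k := by
  obtain ⟨R, hR, hRq, hNR⟩ := exists_isPGroup_not_isPGroup_normalizer hG hqG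
  obtain ⟨⟨b, hb⟩, hbq⟩ : ∃ b : normalizer (R : Set G), ∀ n : ℕ, b ^ q ^ n ≠ 1 := by
    simpa [IsPGroup] using hNR
  obtain ⟨p, k, hp, hbo⟩ := hEPPO b
  have hbq' : ∀ n : ℕ, b ^ q ^ n ≠ 1 := fun n h => hbq n (Subtype.ext (by simpa using h))
  have hk : 0 < k := Nat.pos_of_ne_zero fun hk => hbq' 0 (by
    rw [hk, pow_zero, orderOf_eq_one_iff] at hbo; simp [hbo])
  have hpq : p ≠ q := fun hpq => hbq' k (hpq ▸ hbo ▸ pow_orderOf_eq_one b)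
  exact ⟨R.omegaOneCenter q, b, p, k, omegaOneCenter_ne_bot hRq hR,
    isElementaryAbelian_omegaOneCenter, normalizer_le_normalizer_omegaOneCenter hb, hp, hpq, hk,
    hbo⟩

section Lifting

variable {G S : Type*} [Group G] [Group S] {q : ℕ} [Fact q.Prime]

theorem exists_sylow_mul_mem_normalizer [Finite G] {K : Subgroup G} {y : G}
    (hy : y ∈ normalizer (K : Set G)) :
    ∃ Q : Subgroup G, Q ≤ K ∧ Nat.card Q = q ^ (Nat.card K).factorization q ∧
      ∃ c ∈ K, y * c ∈ normalizer (Q : Set G) := by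
  set M := normalizer (K : Set G)
  set K' := K.subgroupOf M
  obtain ⟨P⟩ : Nonempty (Sylow q K') := inferInstance
  have hyM : (⟨y, hy⟩ : M) ∈
      ((normalizer (P.map K'.subtype : Set M) ⊔ K' : Subgroup M) : Set M) := by
    rw [Sylow.normalizer_sup_eq_top P]; trivial
  rw [mul_normal] at hyM
  obtain ⟨z, hz, c, hc, hzc⟩ := hyM
  refine ⟨(P.map K'.subtype).map M.subtype, ?_, ?_, (c : G)⁻¹, inv_mem (mem_subgroupOf.mp hc), ?_⟩
  · rintro _ ⟨_, ⟨w, -, rfl⟩, rfl⟩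
    exact mem_subgroupOf.mp w.2
  · rw [card_subtype, card_subtype, P.card_eq_multiplicity,
      Nat.card_congr (subgroupOfEquivOfLe le_normalizer).toEquiv]
  · have hz' : y * (c : G)⁻¹ = z := by
      rw [show y = z * c from (congrArg Subtype.val hzc).symm, mul_inv_cancel_right]
    rw [hz']
    exact le_normalizer_map M.subtype ⟨z, hz, rfl⟩

theorem exists_isPGroup_le_comap_of_mem_normalizer [Finite G] {π : G →* S}
    (hπ : Function.Surjective π) {Qb : Subgroup S} (hQb : Qb ≠ ⊥) (hQbq : ∀ x ∈ Qb, x ^ q = 1) {b : S}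
    (hb : b ∈ normalizer (Qb : Set S)) (hbq : (orderOf b).Coprime q) :
    ∃ Q : Subgroup G, Q ≤ Qb.comap π ∧ Q ≠ ⊥ ∧ IsPGroup q Q ∧
      ∃ x ∈ normalizer (Q : Set G), orderOf b ∣ orderOf (π x) := by
  obtain ⟨y, rfl⟩ := hπ b
  have hy : y ∈ normalizer (Qb.comap π : Set G) := by
    rw [← comap_normalizer_eq_of_surjective _ hπ]; exact hb
  obtain ⟨Q, hQK, hcard, c, hc, hyc⟩ := exists_sylow_mul_mem_normalizer (q := q) hy
  have hqK : q ∣ Nat.card (Qb.comap π) := by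
    obtain ⟨⟨w, hw⟩, hw1⟩ := ne_bot_iff_exists_ne_one.mp hQb
    have hwq : orderOf w = q := orderOf_eq_prime (hQbq w hw) (by simpa using hw1)
    refine (hwq ▸ orderOf_dvd_natCard Qb hw).trans ?_
    simpa only [map_comap_eq_self_of_surjective hπ] using card_map_dvd (Qb.comap π) π
  refine ⟨Q, hQK, fun hbot => ?_, IsPGroup.of_card hcard, y * c, hyc, ?_⟩
  · rw [hbot, card_bot, eq_comm, Nat.pow_eq_one] at hcard
    exact hcard.elim (Fact.out : q.Prime).one_lt.ne'
      (Nat.Prime.factorization_pos_of_dvd Fact.out Nat.card_pos.ne' hqK).ne'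
  · rw [map_mul]
    exact orderOf_dvd_orderOf_mul_of_mem_normalizer hQbq hb hc hbq

theorem exists_pow_orderOf_eq_prime_pow_of_map [Finite G] (π : G →* S) (x : G) {p j : ℕ}
    (hp : p.Prime) (hj : 0 < j) (hx : orderOf (π x) = p ^ j) :
    ∃ m e : ℕ, 0 < e ∧ orderOf (x ^ m) = p ^ e ∧ orderOf (π (x ^ m)) = p ^ j := by
  obtain ⟨m, hm, hxm⟩ := exists_orderOf_pow_eq_ordProj x (orderOf_pos x) hp
  have hπ : orderOf (π (x ^ m)) = p ^ j := by
    rw [map_pow, Nat.Coprime.orderOf_pow (hx ▸ hm.pow_left j), hx]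
  have hje := (Nat.pow_dvd_pow_iff_le_right hp.one_lt).mp (hπ ▸ hxm ▸ orderOf_map_dvd π (x ^ m))
  exact ⟨m, _, hj.trans_le hje, hxm, hπ⟩

theorem eq_one_of_mul_comm_of_disjoint_ker
    (hEPPO : ∀ g : S, ∃ p k : ℕ, p.Prime ∧ orderOf g = p ^ k) {π : G →* S} {Qb : Subgroup S}
    (hQbq : ∀ x ∈ Qb, x ^ q = 1) {Q : Subgroup G} (hQK : Q ≤ Qb.comap π)
    (hQN : Disjoint Q π.ker) {a : G} {p j : ℕ} (hp : p.Prime) (hpq : p ≠ q) (hj : 0 < j)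
    (ha : orderOf (π a) = p ^ j) {u : G} (hu : u ∈ Q) (hua : u * a = a * u) : u = 1 := by
  by_contra hu1
  have hπu : π u ≠ 1 := fun h => hu1 (disjoint_def.mp hQN hu (π.mem_ker.mpr h))
  have hπuo : orderOf (π u) = q ^ 1 := by
    rw [pow_one]; exact orderOf_eq_prime (hQbq _ (hQK hu)) hπu
  exact not_commute_of_orderOf_eq_prime_pow hEPPO hp Fact.out hpq hj one_pos ha hπuo
    (by rw [Commute, SemiconjBy, ← map_mul, ← map_mul, hua])

end Lifting

/-- Let `G` be a finite group with a normal subgroup `N` such that `G/N`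
is a nonabelian simple EPPO-group, and let `q` be a prime dividing `|G|` but not `|N|`.
Then there are a nontrivial elementary abelian `q`-subgroup `Q` of `G` and an element
`a ∈ G` of order a positive power of a prime `p ≠ q` normalizing `Q` with `Q = [Q,a]`. -/
theorem exists_elementary_abelian_q_subgroup
    (G : Type*) [Group G] [Finite G] (N : Subgroup G) [N.Normal]
    (hsimple : IsSimpleGroup (G ⧸ N))
    (hnonab : ∃ a b : G ⧸ N, a * b ≠ b * a)
    (hEPPO : ∀ g : G ⧸ N, ∃ p k : ℕ, p.Prime ∧ orderOf g = p ^ k)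
    (q : ℕ) (hq : q.Prime) (hqG : q ∣ Nat.card G) (hqN : ¬ q ∣ Nat.card N) :
    ∃ Q : Subgroup G, Q ≠ ⊥ ∧ IsPGroup q Q ∧
      (∀ x ∈ Q, ∀ y ∈ Q, x * y = y * x) ∧
      (∀ x ∈ Q, x ≠ 1 → orderOf x = q) ∧
      ∃ a : G, a ∈ Subgroup.normalizer (Q : Set G) ∧
        (∃ p k : ℕ, p.Prime ∧ p ≠ q ∧ 0 < k ∧ orderOf a = p ^ k) ∧
        Subgroup.closure {x : G | ∃ u ∈ Q, x = u⁻¹ * a⁻¹ * u * a} = Q := by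
  have : Fact q.Prime := ⟨hq⟩
  set π := QuotientGroup.mk' N
  have hqS : q ∣ Nat.card (G ⧸ N) := by
    rw [card_eq_card_quotient_mul_card_subgroup N] at hqG
    exact (hq.dvd_mul.mp hqG).resolve_right hqN
  obtain ⟨Qb, b, p, k, hQb, hQbel, hb, hp, hpq, hk, hbo⟩ :=
    exists_isElementaryAbelian_normalized_by_prime_pow hnonab hEPPO hqS
  obtain ⟨Q, hQK, hQ, hQq, x, hx, hbx⟩ :=
    exists_isPGroup_le_comap_of_mem_normalizer (QuotientGroup.mk'_surjective N) hQb
      hQbel.pow_eq_one hb (hbo ▸ ((Nat.coprime_primes hp hq).mpr hpq).pow_left k)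
  obtain ⟨j, hj, hxo⟩ := orderOf_eq_prime_pow_of_dvd hEPPO hp hk (hbo ▸ hbx)
  obtain ⟨m, e, he, hao, hπao⟩ := exists_pow_orderOf_eq_prime_pow_of_map π x hp hj hxo
  have hQN : Disjoint Q π.ker := by
    obtain ⟨n, hn⟩ := hQq.exists_card_eq
    rw [QuotientGroup.ker_mk']
    exact disjoint_of_coprime_natCard (hn ▸ (hq.coprime_iff_not_dvd.mpr hqN).pow_left n)
  have hQel := hQbel.of_comap hQK hQN
  refine ⟨Q, hQ, hQq, hQel.mul_comm, fun u hu hu1 => orderOf_eq_prime (hQel.pow_eq_one u hu) hu1,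
    x ^ m, pow_mem hx m, ⟨p, e, hp, hpq, he, hao⟩,
    closure_commutators_eq_self_of_fixedPointFree (pow_mem hx m) fun u hu hua => ?_⟩
  exact eq_one_of_mul_comm_of_disjoint_ker hEPPO hQbel.pow_eq_one hQK hQN hp hpq hj hπao hu hua
end

section
/- Let φ be an automorphism of the symmetric group S₆ on 6 letters which is not inner. Then there exist a permutation x ∈ S₆ \ A₆ (an odd permutation) and a permutation y ∈ A₆ (an even permutation) such that the element x⁻¹ · y⁻¹ · φ(x) · y of S₆ has odd order. -/
open Equiv Equiv.Perm

private def embed4 : Fin 4 ≃ {i : Fin 6 // i.val < 4} where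
  toFun i := ⟨⟨i.val, by omega⟩, i.isLt⟩
  invFun i := ⟨i.val.val, i.2⟩
  left_inv i := rfl
  right_inv i := rfl

private def c4 : Perm (Fin 6) := (finRotate 4).extendDomain embed4

private lemma cycleType_c4 : c4.cycleType = {4} := by
  rw [c4, cycleType_extendDomain]
  exact cycleType_finRotate (n := 2)

private lemma sign_c4 : sign c4 = -1 := by
  rw [sign_of_cycleType, cycleType_c4]; decide

private lemma cycleType_eq_four {σ : Perm (Fin 6)} (hl : σ.cycleType.lcm = 4)
    (hs : sign σ = -1) : σ.cycleType = {4} := by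
  have hsum : σ.cycleType.sum ≤ 6 := by
    rw [sum_cycleType]
    simpa using Finset.card_le_univ σ.support
  have h4 : 4 ∈ σ.cycleType := by
    by_contra h4
    have : σ.cycleType.lcm ∣ 2 := by
      apply Multiset.lcm_dvd.2
      intro n hn
      have h2 : 2 ≤ n := two_le_of_mem_cycleType hn
      have hd : n ∣ 4 := hl ▸ Multiset.dvd_lcm hn
      have hle : n ≤ 4 := Nat.le_of_dvd (by norm_num) hd
      interval_cases n <;> simp_all <;> omega
    rw [hl] at this; omega
  obtain ⟨m, hmeq⟩ := Multiset.exists_cons_of_mem h4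
  rw [hmeq] at hsum ⊢
  rcases eq_or_ne m 0 with rfl | hm
  · rfl
  · exfalso
    obtain ⟨a, ha⟩ := Multiset.exists_mem_of_ne_zero hm
    obtain ⟨m', rfl⟩ := Multiset.exists_cons_of_mem ha
    have ha2 : 2 ≤ a := two_le_of_mem_cycleType (show a ∈ σ.cycleType by rw [hmeq]; simp)
    have hm'0 : m' = 0 := by
      rcases eq_or_ne m' 0 with h | h
      · exact h
      · exfalso
        obtain ⟨b, hb⟩ := Multiset.exists_mem_of_ne_zero h
        have hb2 : 2 ≤ b := two_le_of_mem_cycleType (show b ∈ σ.cycleType by rw [hmeq]; simp [hb])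
        have := Multiset.single_le_sum (fun x _ => Nat.zero_le x) b hb
        simp [Multiset.sum_cons] at hsum
        omega
    subst hm'0
    have ha4 : a = 2 := by
      simp [Multiset.sum_cons] at hsum
      omega
    subst ha4
    rw [sign_of_cycleType, hmeq] at hs
    exact absurd hs (by decide)

set_option linter.unnecessarySeqFocus false

/-- Let `φ` be a non-inner (exceptional) automorphism of the symmetric
group `S₆`. Then there exist an odd permutation `x` and an even permutation `y` such that
`x⁻¹ * y⁻¹ * φ(x) * y` has odd order. -/
theorem exists_odd_order_twisted_commutator_of_exceptional_aut
    (φ : MulAut (Equiv.Perm (Fin 6)))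
    (hφ : ¬ ∃ g : Equiv.Perm (Fin 6), ∀ x : Equiv.Perm (Fin 6), φ x = g⁻¹ * x * g) :
    ∃ x y : Equiv.Perm (Fin 6),
      Equiv.Perm.sign x = -1 ∧ Equiv.Perm.sign y = 1 ∧
      Odd (orderOf (x⁻¹ * y⁻¹ * φ x * y)) := by
  have hsign : ∀ x : Perm (Fin 6), sign (φ x) = sign x := by
    have hsurj : Function.Surjective ⇑((sign : Perm (Fin 6) →* ℤˣ).comp φ.toMonoidHom) := by
      intro a
      obtain ⟨x, hx⟩ := sign_surjective (α := Fin 6) a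
      exact ⟨φ.symm x, by simpa using hx⟩
    have h : (sign : Perm (Fin 6) →* ℤˣ).comp φ.toMonoidHom = sign :=
      eq_sign_of_surjective_hom hsurj
    intro x
    exact DFunLike.congr_fun h x
  have hord : orderOf (φ c4) = orderOf c4 := MulEquiv.orderOf_eq φ c4
  have hlcm : (φ c4).cycleType.lcm = 4 := by
    rw [lcm_cycleType, hord, ← lcm_cycleType, cycleType_c4]
    simp
  have hct : (φ c4).cycleType = {4} :=
    cycleType_eq_four hlcm (by rw [hsign c4, sign_c4])
  have hconj : IsConj (φ c4) c4 := isConj_of_cycleType_eq (hct.trans cycleType_c4.symm)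
  obtain ⟨g, hg⟩ := isConj_iff.mp hconj
  rcases Int.units_eq_one_or (sign g) with h1 | h1
  · refine ⟨c4, g⁻¹, sign_c4, by simp [h1], ?_⟩
    have key : c4⁻¹ * (g⁻¹)⁻¹ * φ c4 * g⁻¹ = c4⁻¹ * (g * φ c4 * g⁻¹) := by group
    rw [key, hg, inv_mul_cancel, orderOf_one]
    exact odd_one
  · refine ⟨c4, g⁻¹ * c4, sign_c4, by simp [h1, sign_c4], ?_⟩
    have key : c4⁻¹ * (g⁻¹ * c4)⁻¹ * φ c4 * (g⁻¹ * c4) =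
        c4⁻¹ * c4⁻¹ * (g * φ c4 * g⁻¹) * c4 := by group
    rw [key, hg]
    have : c4⁻¹ * c4⁻¹ * c4 * c4 = 1 := by group
    rw [this, orderOf_one]
    exact odd_one
end
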